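/- arXiv:1303.5021 — 4 statements merged into one kernel-verified Lean document; each statement's English description precedes it below -/
import Mathlib

section
/- Every w ∈ W_n has an ascending representative in its equivalence class: there exists an ascending w̃ ∈ W_n with w ∼ w̃, where ∼ is the equivalence relation generated by left and right admissible operators. -/
open scoped BigOperators

/-!
Common definitions: the complex reflection group `G(r,1,n)` recorded in one-line
notation, its one-dimensional representations, the generalized Robinson–Schensted
map to pairs of `r`-multitableaux, and the associated tableau statistics.
-/

/-- An element of `W_n = G(r,1,n)` in one-line notation
`w = [ζ^{a 0} σ 0, …, ζ^{a (n-1)} σ (n-1)]`: the nonzero entry of column `i`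
is `ζ ^ (a i)` and lies in row `σ i`. -/
@[ext]
structure GW (r n : ℕ) where
  a : Fin n → ZMod r
  σ : Equiv.Perm (Fin n)

namespace GW

variable {r n : ℕ}

instance : Mul (GW r n) := ⟨fun w v => ⟨fun j => w.a (v.σ j) + v.a j, w.σ * v.σ⟩⟩
instance : One (GW r n) := ⟨⟨fun _ => 0, 1⟩⟩
instance : Inv (GW r n) := ⟨fun w => ⟨fun j => -(w.a (w.σ⁻¹ j)), w.σ⁻¹⟩⟩

@[simp] lemma mul_a (w v : GW r n) (j : Fin n) : (w * v).a j = w.a (v.σ j) + v.a j := rfl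
@[simp] lemma mul_sigma (w v : GW r n) : (w * v).σ = w.σ * v.σ := rfl
@[simp] lemma one_a (j : Fin n) : (1 : GW r n).a j = 0 := rfl
@[simp] lemma one_sigma : (1 : GW r n).σ = 1 := rfl
@[simp] lemma inv_a (w : GW r n) (j : Fin n) : (w⁻¹).a j = -(w.a (w.σ⁻¹ j)) := rfl
@[simp] lemma inv_sigma (w : GW r n) : (w⁻¹).σ = w.σ⁻¹ := rfl

instance : Group (GW r n) where
  mul_assoc w v u := by
    ext j
    · simp [Equiv.Perm.mul_apply, add_assoc]
    · simp [mul_assoc]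
  one_mul w := by ext j <;> simp
  mul_one w := by ext j <;> simp
  inv_mul_cancel w := by
    ext j
    · simp
    · simp

end GW

/-- `ζ = exp(2π√-1 / r)`, a primitive `r`-th root of unity. -/
noncomputable def zeta (r : ℕ) : ℂ := Complex.exp (2 * Real.pi * Complex.I / r)

/-- The one-dimensional representation `sgn_i` of `W_n = G(r,1,n)`:
`sgn_i w = ζ^{i (a_1 + ⋯ + a_n)} ⬝ sgn σ`. -/
noncomputable def sgnRep (r n : ℕ) (i : ℕ) (w : GW r n) : ℂ :=
  zeta r ^ (i * ∑ j, (w.a j).val) * ((Equiv.Perm.sign w.σ : ℤ) : ℂ)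

/-- A tableau, recorded as its list of rows of labels. -/
abbrev Tab := List (List ℕ)

/-- Robinson–Schensted row insertion of the value `x` into a tableau. -/
def rowInsert : ℕ → Tab → Tab
  | x, [] => [[x]]
  | x, row :: rest =>
    if h : row.findIdx (fun y => decide (x < y)) < row.length then
      row.set (row.findIdx (fun y => decide (x < y))) x ::
        rowInsert (row.get ⟨row.findIdx (fun y => decide (x < y)), h⟩) rest
    else (row ++ [x]) :: rest

/-- The shape of a tableau: its list of row lengths. -/
def shape (T : Tab) : List ℕ := T.map List.length

/-- Append the label `lab` at the end of row `i` of the (recording) tableau `Q`. -/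
def place (Q : Tab) (i lab : ℕ) : Tab :=
  if i < Q.length then Q.set i ((Q.getD i []) ++ [lab]) else Q ++ [[lab]]

/-- One step of the Robinson–Schensted algorithm: insert the value `x` into the
insertion tableau and record the label `lab` in the new box of the recording
tableau. -/
def RSstep : Tab × Tab → ℕ × ℕ → Tab × Tab := fun PQ xl =>
  let P' := rowInsert xl.1 PQ.1
  let i := (List.range P'.length).findIdx
    (fun i => decide ((PQ.1.getD i []).length < (P'.getD i []).length))
  (P', place PQ.2 i xl.2)

/-- The classical Robinson–Schensted correspondence applied to a word of
(value, label) pairs, producing the insertion and recording tableaux. -/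
def RSword (word : List (ℕ × ℕ)) : Tab × Tab := word.foldl RSstep ([], [])

/-- The positions `i` (in increasing order) whose attached exponent `a i` equals `k`. -/
def labelIdx {r n : ℕ} (w : GW r n) (k : ℕ) : List (Fin n) :=
  (List.finRange n).filter (fun i => decide ((w.a i).val = k))

/-- The word `w^(k)` together with its recording labels: the values `σ i` (1-based)
attached to the positions `i` (1-based) with `a i = k`, in increasing order of `i`. -/
def wordPairs {r n : ℕ} (w : GW r n) (k : ℕ) : List (ℕ × ℕ) :=
  (labelIdx w k).map (fun i => ((w.σ i : ℕ) + 1, (i : ℕ) + 1))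

/-- The insertion multitableau `P(w)` of the generalized Robinson–Schensted map. -/
def Ptab {r n : ℕ} (w : GW r n) : Fin r → Tab := fun k => (RSword (wordPairs w k)).1

/-- The recording multitableau `Q(w)` of the generalized Robinson–Schensted map. -/
def Qtab {r n : ℕ} (w : GW r n) : Fin r → Tab := fun k => (RSword (wordPairs w k)).2

/-- The set of labels of a tableau. -/
def labels (T : Tab) : Finset ℕ := T.flatten.toFinset

/-- The (0-based) index of the row of `T` containing the label `x`. -/
def rowOf (T : Tab) (x : ℕ) : ℕ := T.findIdx (fun row => decide (x ∈ row))

/-- The number of inversions of a tableau: pairs `(i, j)` with `i < j` and the box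
labeled `i` in a row strictly below the box labeled `j`. -/
def invTab (T : Tab) : ℕ :=
  ((labels T ×ˢ labels T).filter (fun p => p.1 < p.2 ∧ rowOf T p.2 < rowOf T p.1)).card

/-- `crossInv S T` is the number of pairs `(j, i)` with `j > i`, `j` a label of `S`
and `i` a label of `T`, i.e. the cardinality of `Inv(S, T)`. -/
def crossInv (S T : Tab) : ℕ :=
  ((labels S ×ˢ labels T).filter (fun p => p.2 < p.1)).card

/-- The number of inversions of a multitableau. -/
def invMulti {r : ℕ} (T : Fin r → Tab) : ℕ :=
  (∑ k, invTab (T k)) + ∑ k, ∑ l, if k < l then crossInv (T k) (T l) else 0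

/-- The sign `(-1)^{inv T}` of a multitableau. -/
def signMulti {r : ℕ} (T : Fin r → Tab) : ℂ := (-1) ^ invMulti T

/-- The number of boxes in the even-indexed rows (1-based indexing) of a tableau. -/
def eTab (T : Tab) : ℕ :=
  ∑ i ∈ Finset.range T.length, if i % 2 = 1 then (T.getD i []).length else 0

/-- The total number of boxes in the even-indexed rows of a multitableau. -/
def eMulti {r : ℕ} (T : Fin r → Tab) : ℕ := ∑ k, eTab (T k)

/-- The number of boxes of a tableau. -/
def sizeTab (T : Tab) : ℕ := T.flatten.length

/-- `2 ⬝ spin T = Σ_k k ⬝ |sh(T_k)|`. -/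
def twoSpin {r : ℕ} (T : Fin r → Tab) : ℕ := ∑ k : Fin r, (k : ℕ) * sizeTab (T k)

/-- The spin statistic `spin T = (1/2) Σ_k k ⬝ |sh(T_k)|`. -/
def spin {r : ℕ} (T : Fin r → Tab) : ℚ := (twoSpin T : ℚ) / 2

/-- The function `π_i(w) = (-1)^{e(P)} (ζ^i)^{spin P + spin Q} sign(P) sign(Q)`
where `(P, Q) = RS(w)`. -/
noncomputable def piStat (r n : ℕ) (i : ℕ) (w : GW r n) : ℂ :=
  (-1) ^ eMulti (Ptab w) *
    (zeta r ^ i) ^ (((spin (Ptab w) + spin (Qtab w) : ℚ) : ℂ)) *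
    signMulti (Ptab w) * signMulti (Qtab w)

/-- `T` is a standard Young `r`-multitableau of rank `n`: each component consists of
nonempty rows of weakly decreasing lengths, labels strictly increase along rows and
down columns, and the labels used are exactly `1, …, n`, each exactly once. -/
def IsStandardMulti (r n : ℕ) (T : Fin r → Tab) : Prop :=
  (∀ k : Fin r,
      (∀ row ∈ T k, row ≠ [] ∧ List.Chain' (· < ·) row) ∧
      List.Chain' (fun r1 r2 => r2.length ≤ r1.length ∧
        ∀ j < r2.length, r1.getD j 0 < r2.getD j 0) (T k)) ∧
  (∑ k : Fin r, ((T k).flatten : Multiset ℕ)) = (Finset.Icc 1 n).val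

/-- A multitableau is ascending if every label of `T k` is smaller than every label
of `T (k+1)`. -/
def AscendingMulti {r : ℕ} (T : Fin r → Tab) : Prop :=
  ∀ (k : ℕ) (h : k + 1 < r),
    ∀ x ∈ labels (T ⟨k, by omega⟩), ∀ y ∈ labels (T ⟨k + 1, h⟩), x < y

/-- An element `w ∈ W_n` is ascending if its exponents increase weakly and, for each
`k < r - 1`, every element of the word `w^(k)` is smaller than every element of
`w^(k+1)`. -/
def AscendingElem {r n : ℕ} (w : GW r n) : Prop :=
  (∀ i j : Fin n, i ≤ j → (w.a i).val ≤ (w.a j).val) ∧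
  ∀ k : ℕ, k + 1 < r →
    ∀ x ∈ (wordPairs w k).map Prod.fst, ∀ y ∈ (wordPairs w (k + 1)).map Prod.fst, x < y

/-- The generator `s_0 = [ζ·1, 2, …, n]`. -/
def s0El (r n : ℕ) : GW r n := ⟨fun i => if (i : ℕ) = 0 then 1 else 0, 1⟩

/-- The generator `s_j` (for `1 ≤ j ≤ n - 1`): the permutation matrix of the
transposition interchanging `j` and `j + 1` (1-based values). -/
def sEl (r n : ℕ) (j : ℕ) (h1 : 1 ≤ j) (h2 : j + 1 ≤ n) : GW r n :=
  ⟨fun _ => 0, Equiv.swap ⟨j - 1, by omega⟩ ⟨j, by omega⟩⟩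

/-- The left operator `L_j(w) = s_j ⬝ w`. -/
def Lop {r n : ℕ} (w : GW r n) (j : ℕ) (h1 : 1 ≤ j) (h2 : j + 1 ≤ n) : GW r n :=
  sEl r n j h1 h2 * w

/-- The right operator `R_j(w) = w ⬝ s_j`. -/
def Rop {r n : ℕ} (w : GW r n) (j : ℕ) (h1 : 1 ≤ j) (h2 : j + 1 ≤ n) : GW r n :=
  w * sEl r n j h1 h2

/-- `L_j` is left admissible for `w`: the exponents attached to the entries with
values `j` and `j+1` differ. -/
def LeftAdm {r n : ℕ} (w : GW r n) (j : ℕ) (h1 : 1 ≤ j) (h2 : j + 1 ≤ n) : Prop :=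
  w.a (w.σ⁻¹ ⟨j - 1, by omega⟩) ≠ w.a (w.σ⁻¹ ⟨j, by omega⟩)

/-- `R_j` is right admissible for `w`: the exponents in positions `j` and `j+1`
differ, i.e. `a_j ≠ a_{j+1}`. -/
def RightAdm {r n : ℕ} (w : GW r n) (j : ℕ) (h1 : 1 ≤ j) (h2 : j + 1 ≤ n) : Prop :=
  w.a ⟨j - 1, by omega⟩ ≠ w.a ⟨j, by omega⟩

/-- A single admissible transformation: `w ↦ L_j(w)` for a left admissible `L_j`,
or `w ↦ R_j(w)` for a right admissible `R_j`. -/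
inductive AdmStep (r n : ℕ) : GW r n → GW r n → Prop
  | left (w : GW r n) (j : ℕ) (h1 : 1 ≤ j) (h2 : j + 1 ≤ n)
      (ha : LeftAdm w j h1 h2) : AdmStep r n w (Lop w j h1 h2)
  | right (w : GW r n) (j : ℕ) (h1 : 1 ≤ j) (h2 : j + 1 ≤ n)
      (ha : RightAdm w j h1 h2) : AdmStep r n w (Rop w j h1 h2)

section AscendingAux

open Finset

variable {n : ℕ}

/-- Weighted measure used for bubble-sort termination. -/
def Mw (n : ℕ) (g : Fin n → ℕ) : ℕ := ∑ j : Fin n, (n - (j : ℕ)) * g j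

lemma sum_split_pq (F : Fin n → ℕ) (p q : Fin n) (hpq : p ≠ q) :
    ∑ j, F j = ∑ j ∈ (Finset.univ.erase p).erase q, F j + F q + F p := by
  rw [Finset.sum_erase_add _ _ (by simp [hpq.symm] : q ∈ Finset.univ.erase p),
      Finset.sum_erase_add _ _ (Finset.mem_univ p)]

lemma Mw_swap (g : Fin n → ℕ) (p q : Fin n) (hpq : p ≠ q) :
    Mw n (g ∘ Equiv.swap p q) + ((n - (p:ℕ)) * g p + (n - (q:ℕ)) * g q)
      = Mw n g + ((n - (p:ℕ)) * g q + (n - (q:ℕ)) * g p) := by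
  unfold Mw
  rw [sum_split_pq (fun j => (n - (j:ℕ)) * (g ∘ Equiv.swap p q) j) p q hpq,
      sum_split_pq (fun j => (n - (j:ℕ)) * g j) p q hpq]
  have h1 : ∀ j ∈ (Finset.univ.erase p).erase q,
      (n - (j:ℕ)) * (g ∘ Equiv.swap p q) j = (n - (j:ℕ)) * g j := by
    intro j hj
    simp only [Finset.mem_erase] at hj
    simp [Equiv.swap_apply_of_ne_of_ne hj.2.1 hj.1]
  rw [Finset.sum_congr rfl h1]
  simp only [Function.comp_apply, Equiv.swap_apply_left, Equiv.swap_apply_right]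
  ring

lemma Mw_swap_lt (g : Fin n → ℕ) (k : ℕ) (hk : k + 1 < n)
    (hd : g ⟨k+1, hk⟩ < g ⟨k, by omega⟩) :
    Mw n (g ∘ Equiv.swap ⟨k, by omega⟩ ⟨k+1, hk⟩) < Mw n g := by
  have hpq : (⟨k, by omega⟩ : Fin n) ≠ ⟨k+1, hk⟩ := by simp [Fin.ext_iff]
  have h := Mw_swap g ⟨k, by omega⟩ ⟨k+1, hk⟩ hpq
  simp only at h
  have hw : n - k = (n - (k+1)) + 1 := by omega
  rw [hw] at h
  set v := n - (k + 1)
  set a := g (⟨k, by omega⟩ : Fin n)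
  set b := g (⟨k+1, hk⟩ : Fin n)
  have : Mw n (g ∘ Equiv.swap ⟨k, by omega⟩ ⟨k+1, hk⟩) + a = Mw n g + b := by
    nlinarith [h]
  omega

lemma exists_descent (g : Fin n → ℕ) (h : ¬ ∀ i j : Fin n, i ≤ j → g i ≤ g j) :
    ∃ k : ℕ, ∃ hk : k + 1 < n, g ⟨k+1, hk⟩ < g ⟨k, by omega⟩ := by
  by_contra hc
  push_neg at hc
  apply h
  have step : ∀ k (hk : k + 1 < n), g ⟨k, by omega⟩ ≤ g ⟨k+1, hk⟩ := fun k hk => hc k hk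
  have key : ∀ d i (hi : i + d < n), g ⟨i, by omega⟩ ≤ g ⟨i + d, hi⟩ := by
    intro d
    induction d with
    | zero => intro i hi; exact le_refl _
    | succ d ih =>
      intro i hi
      have h1 : i + d < n := by omega
      have h2 := step (i + d) (by omega)
      have h3 := ih i h1
      have : (⟨i + d + 1, by omega⟩ : Fin n) = ⟨i + (d+1), hi⟩ := by simp [Fin.ext_iff]; omega
      rw [this] at h2
      exact le_trans h3 h2
  intro i j hij
  have h1 := key ((j : ℕ) - (i : ℕ)) (i : ℕ) (by omega)
  have h2 : (⟨(i:ℕ), by omega⟩ : Fin n) = i := by simp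
  have h3 : (⟨(i:ℕ) + ((j:ℕ) - (i:ℕ)), by omega⟩ : Fin n) = j := by
    simp [Fin.ext_iff]; omega
  rwa [h2, h3] at h1

end AscendingAux

section AscendingPhases

variable {r n : ℕ}

lemma Rop_a (w : GW r n) (k : ℕ) (hk : k + 1 < n) :
    (Rop w (k+1) (by omega) (by omega)).a
      = fun i => w.a (Equiv.swap (⟨k, by omega⟩ : Fin n) ⟨k+1, hk⟩ i) := by
  funext i
  show w.a ((sEl r n (k+1) (by omega) (by omega)).σ i) + (sEl r n (k+1) (by omega) (by omega)).a i = _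
  simp [sEl]

lemma Lop_a (w : GW r n) (k : ℕ) (hk : k + 1 < n) :
    (Lop w (k+1) (by omega) (by omega)).a = w.a := by
  funext i
  show (sEl r n (k+1) (by omega) (by omega)).a (w.σ i) + w.a i = _
  simp [sEl]

lemma Lop_sigma_inv (w : GW r n) (k : ℕ) (hk : k + 1 < n) :
    (Lop w (k+1) (by omega) (by omega)).σ⁻¹
      = w.σ⁻¹ * Equiv.swap (⟨k, by omega⟩ : Fin n) ⟨k+1, hk⟩ := by
  show ((sEl r n (k+1) (by omega) (by omega)).σ * w.σ)⁻¹ = _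
  rw [mul_inv_rev]
  simp [sEl, Equiv.swap_inv]

lemma phase1 (r n : ℕ) : ∀ (N : ℕ) (w : GW r n), Mw n (fun i => (w.a i).val) ≤ N →
    ∃ w1 : GW r n, (∀ i j : Fin n, i ≤ j → (w1.a i).val ≤ (w1.a j).val) ∧
      Relation.EqvGen (AdmStep r n) w w1 := by
  intro N
  induction N with
  | zero =>
    intro w hw
    by_cases hmono : ∀ i j : Fin n, i ≤ j → (w.a i).val ≤ (w.a j).val
    · exact ⟨w, hmono, Relation.EqvGen.refl w⟩
    · obtain ⟨k, hk, hd⟩ := exists_descent _ hmono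
      have := Mw_swap_lt (fun i => (w.a i).val) k hk hd
      omega
  | succ N ih =>
    intro w hw
    by_cases hmono : ∀ i j : Fin n, i ≤ j → (w.a i).val ≤ (w.a j).val
    · exact ⟨w, hmono, Relation.EqvGen.refl w⟩
    · obtain ⟨k, hk, hd⟩ := exists_descent _ hmono
      have hne : w.a (⟨k, by omega⟩ : Fin n) ≠ w.a ⟨k+1, hk⟩ := by
        intro e
        rw [e] at hd
        exact lt_irrefl _ hd
      have hadm : RightAdm w (k+1) (by omega) (by omega) := hne
      set w' := Rop w (k+1) (by omega) (by omega) with hw'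
      have ha' : (fun i => (w'.a i).val)
          = (fun i => (w.a i).val) ∘ Equiv.swap (⟨k, by omega⟩ : Fin n) ⟨k+1, hk⟩ := by
        funext i
        simp [hw', Rop_a w k hk]
      have hlt : Mw n (fun i => (w'.a i).val) < Mw n (fun i => (w.a i).val) := by
        rw [ha']
        exact Mw_swap_lt _ k hk hd
      obtain ⟨w1, hm1, hc1⟩ := ih w' (by omega)
      exact ⟨w1, hm1, Relation.EqvGen.trans _ _ _
        (Relation.EqvGen.rel _ _ (AdmStep.right w (k+1) (by omega) (by omega) hadm)) hc1⟩

lemma phase2 (r n : ℕ) : ∀ (N : ℕ) (w : GW r n),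
    Mw n (fun v => (w.a (w.σ⁻¹ v)).val) ≤ N →
    (∀ i j : Fin n, i ≤ j → (w.a i).val ≤ (w.a j).val) →
    ∃ w1 : GW r n,
      (∀ i j : Fin n, i ≤ j → (w1.a i).val ≤ (w1.a j).val) ∧
      (∀ i j : Fin n, i ≤ j → (w1.a (w1.σ⁻¹ i)).val ≤ (w1.a (w1.σ⁻¹ j)).val) ∧
      Relation.EqvGen (AdmStep r n) w w1 := by
  intro N
  induction N with
  | zero =>
    intro w hw hmono
    by_cases hemono : ∀ i j : Fin n, i ≤ j → (w.a (w.σ⁻¹ i)).val ≤ (w.a (w.σ⁻¹ j)).val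
    · exact ⟨w, hmono, hemono, Relation.EqvGen.refl w⟩
    · obtain ⟨k, hk, hd⟩ := exists_descent _ hemono
      have := Mw_swap_lt (fun v => (w.a (w.σ⁻¹ v)).val) k hk hd
      omega
  | succ N ih =>
    intro w hw hmono
    by_cases hemono : ∀ i j : Fin n, i ≤ j → (w.a (w.σ⁻¹ i)).val ≤ (w.a (w.σ⁻¹ j)).val
    · exact ⟨w, hmono, hemono, Relation.EqvGen.refl w⟩
    · obtain ⟨k, hk, hd⟩ := exists_descent _ hemono
      have hne : w.a (w.σ⁻¹ (⟨k, by omega⟩ : Fin n)) ≠ w.a (w.σ⁻¹ ⟨k+1, hk⟩) := by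
        intro e
        rw [e] at hd
        exact lt_irrefl _ hd
      have hadm : LeftAdm w (k+1) (by omega) (by omega) := hne
      set w' := Lop w (k+1) (by omega) (by omega) with hw'
      have ha' : w'.a = w.a := Lop_a w k hk
      have he' : (fun v => (w'.a (w'.σ⁻¹ v)).val)
          = (fun v => (w.a (w.σ⁻¹ v)).val)
              ∘ Equiv.swap (⟨k, by omega⟩ : Fin n) ⟨k+1, hk⟩ := by
        funext v
        simp only [Function.comp_apply, hw', Lop_sigma_inv w k hk, Lop_a w k hk,
          Equiv.Perm.mul_apply]
      have hlt : Mw n (fun v => (w'.a (w'.σ⁻¹ v)).val)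
          < Mw n (fun v => (w.a (w.σ⁻¹ v)).val) := by
        rw [he']
        exact Mw_swap_lt _ k hk hd
      have hmono' : ∀ i j : Fin n, i ≤ j → (w'.a i).val ≤ (w'.a j).val := by
        intro i j hij; rw [ha']; exact hmono i j hij
      obtain ⟨w1, hm1, he1, hc1⟩ := ih w' (by omega) hmono'
      exact ⟨w1, hm1, he1, Relation.EqvGen.trans _ _ _
        (Relation.EqvGen.rel _ _ (AdmStep.left w (k+1) (by omega) (by omega) hadm)) hc1⟩

end AscendingPhases


/-- **Proposition.** Every `w ∈ W_n` has an ascending representative in its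
equivalence class under the relation generated by left and right admissible
operators. -/
theorem exists_ascending_representative (r n : ℕ) (hr : 1 ≤ r) (hn : 1 ≤ n)
    (w : GW r n) :
    ∃ wt : GW r n, AscendingElem wt ∧ Relation.EqvGen (AdmStep r n) w wt := by
  obtain ⟨w1, hmono, hch1⟩ := phase1 r n (Mw n (fun i => (w.a i).val)) w le_rfl
  obtain ⟨w2, hmono2, hemono, hch2⟩ :=
    phase2 r n (Mw n (fun v => (w1.a (w1.σ⁻¹ v)).val)) w1 le_rfl hmono
  refine ⟨w2, ⟨hmono2, ?_⟩, Relation.EqvGen.trans _ _ _ hch1 hch2⟩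
  intro k hk x hx y hy
  simp only [wordPairs, labelIdx, List.map_map, List.mem_map, List.mem_filter,
    List.mem_finRange, true_and, Function.comp_apply, decide_eq_true_eq] at hx hy
  obtain ⟨i, hik, hxi⟩ := hx
  obtain ⟨i', hik', hyi⟩ := hy
  have hei : (w2.a (w2.σ⁻¹ (w2.σ i))).val = k := by
    rw [Equiv.Perm.inv_def, Equiv.symm_apply_apply]; exact hik
  have hei' : (w2.a (w2.σ⁻¹ (w2.σ i'))).val = k + 1 := by
    rw [Equiv.Perm.inv_def, Equiv.symm_apply_apply]; exact hik'
  have hlt : w2.σ i < w2.σ i' := by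
    by_contra hle
    have := hemono (w2.σ i') (w2.σ i) (le_of_not_gt hle)
    omega
  have hv : (w2.σ i : ℕ) < (w2.σ i' : ℕ) := hlt
  omega
end

section
/- Let w ∈ W_n. If R_i is right admissible for w, then P(R_i(w)) = P(w); and if L_i is left admissible for w, then Q(L_i(w)) = Q(w). -/
open scoped BigOperators

section AuxRS

lemma aux_findIdx_map {α β : Type*} (f : α → β) (p : β → Bool) (l : List α) :
    (l.map f).findIdx p = l.findIdx (fun x => p (f x)) := by
  induction l with
  | nil => rfl
  | cons a l ih => simp [List.findIdx_cons, ih]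

lemma aux_findIdx_congr {α : Type*} {p q : α → Bool} {l : List α}
    (h : ∀ x ∈ l, p x = q x) : l.findIdx p = l.findIdx q := by
  induction l with
  | nil => rfl
  | cons a l ih =>
    simp only [List.findIdx_cons, h a (by simp)]
    rw [ih (fun x hx => h x (by simp [hx]))]

lemma aux_mem_rowInsert_flatten {x v : ℕ} :
    ∀ {T : Tab}, v ∈ (rowInsert x T).flatten → v = x ∨ v ∈ T.flatten := by
  intro T
  induction T generalizing x with
  | nil => intro h; simp [rowInsert] at h; simp [h]
  | cons row rest ih =>
    intro h
    rw [rowInsert] at h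
    split at h
    · next hlt =>
      rw [List.flatten_cons, List.mem_append] at h
      rcases h with h | h
      · rcases List.mem_or_eq_of_mem_set h with h' | h'
        · right; simp [h']
        · left; exact h'
      · rcases ih h with h' | h'
        · right
          have : row.get ⟨_, hlt⟩ ∈ row := List.get_mem _ _
          simp [h' ▸ this]
        · right; simp [h']
    · next =>
      rw [List.flatten_cons, List.mem_append, List.mem_append] at h
      rcases h with (h | h) | h
      · right; simp [h]
      · left; simpa using h
      · right; simp [h]

lemma aux_rowInsert_map (S : ℕ → Prop) (f : ℕ → ℕ)
    (hf : ∀ x y, S x → S y → (x < y ↔ f x < f y)) :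
    ∀ (T : Tab) (x : ℕ), S x → (∀ v ∈ T.flatten, S v) →
      rowInsert (f x) (T.map (List.map f)) = (rowInsert x T).map (List.map f) := by
  intro T
  induction T with
  | nil => intro x _ _; rfl
  | cons row rest ih =>
    intro x hx hT
    have hrow : ∀ v ∈ row, S v := fun v hv => hT v (by simp [hv])
    have hrest : ∀ v ∈ rest.flatten, S v := fun v hv => hT v (by simp [hv])
    have hidx : (row.map f).findIdx (fun y => decide (f x < y))
        = row.findIdx (fun y => decide (x < y)) := by
      rw [aux_findIdx_map]
      exact aux_findIdx_congr (fun y hy => by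
        simp only [decide_eq_decide]
        exact (hf x y hx (hrow y hy)).symm)
    simp only [List.map_cons, rowInsert, hidx, List.length_map]
    by_cases h : row.findIdx (fun y => decide (x < y)) < row.length
    · rw [dif_pos h, dif_pos h]
      have hget : (row.map f).get ⟨row.findIdx (fun y => decide (x < y)), by
            simpa using h⟩ = f (row.get ⟨_, h⟩) := by
        simp [List.get_eq_getElem]
      rw [hget, ih (row.get ⟨_, h⟩) (hrow _ (List.get_mem _ _)) hrest]
      rw [List.map_cons, List.map_set]
    · rw [dif_neg h, dif_neg h]
      simp

lemma aux_length_getD_map (f : ℕ → ℕ) (T : Tab) (i : ℕ) :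
    ((T.map (List.map f)).getD i []).length = (T.getD i []).length := by
  rcases lt_or_ge i T.length with h | h
  · rw [List.getD_eq_getElem?_getD, List.getD_eq_getElem?_getD,
      List.getElem?_eq_getElem h, List.getElem?_eq_getElem (by simpa using h)]
    simp
  · rw [List.getD_eq_default _ _ (by simpa using h), List.getD_eq_default _ _ h]

lemma aux_RSstep_map (S : ℕ → Prop) (f : ℕ → ℕ)
    (hf : ∀ x y, S x → S y → (x < y ↔ f x < f y))
    (P Q : Tab) (x lab : ℕ) (hx : S x) (hP : ∀ v ∈ P.flatten, S v) :
    RSstep (P.map (List.map f), Q) (f x, lab)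
      = ((RSstep (P, Q) (x, lab)).1.map (List.map f), (RSstep (P, Q) (x, lab)).2) := by
  have h1 : rowInsert (f x) (P.map (List.map f)) = (rowInsert x P).map (List.map f) :=
    aux_rowInsert_map S f hf P x hx hP
  unfold RSstep
  simp only [h1, List.length_map]
  congr 2
  apply aux_findIdx_congr
  intro i _
  simp only [decide_eq_decide]
  rw [aux_length_getD_map, aux_length_getD_map]

lemma aux_foldl_map (S : ℕ → Prop) (f : ℕ → ℕ)
    (hf : ∀ x y, S x → S y → (x < y ↔ f x < f y)) :
    ∀ (word : List (ℕ × ℕ)) (P Q : Tab),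
      (∀ v ∈ P.flatten, S v) → (∀ p ∈ word, S p.1) →
      ((word.map (fun p => (f p.1, p.2))).foldl RSstep (P.map (List.map f), Q))
        = (((word.foldl RSstep (P, Q)).1).map (List.map f),
            (word.foldl RSstep (P, Q)).2) := by
  intro word
  induction word with
  | nil => intros; rfl
  | cons p rest ih =>
    intro P Q hP hw
    simp only [List.map_cons, List.foldl_cons]
    rw [aux_RSstep_map S f hf P Q p.1 p.2 (hw p (by simp)) hP]
    have hP' : ∀ v ∈ (RSstep (P, Q) (p.1, p.2)).1.flatten, S v := by
      intro v hv
      rcases aux_mem_rowInsert_flatten hv with h | h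
      · exact h ▸ hw p (by simp)
      · exact hP v h
    rw [ih _ _ hP' (fun q hq => hw q (by simp [hq]))]

lemma aux_foldl_fst_eq :
    ∀ (w1 w2 : List (ℕ × ℕ)) (P Q Q' : Tab),
      w1.map Prod.fst = w2.map Prod.fst →
      (w1.foldl RSstep (P, Q)).1 = (w2.foldl RSstep (P, Q')).1 := by
  intro w1
  induction w1 with
  | nil =>
    intro w2 P Q Q' h
    cases w2 with
    | nil => rfl
    | cons _ _ => simp at h
  | cons p rest ih =>
    intro w2 P Q Q' h
    cases w2 with
    | nil => simp at h
    | cons q rest2 =>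
      simp only [List.map_cons, List.cons.injEq] at h
      simp only [List.foldl_cons]
      rw [show RSstep (P, Q) p = (rowInsert p.1 P, (RSstep (P, Q) p).2) from rfl,
        show RSstep (P, Q') q = (rowInsert q.1 P, (RSstep (P, Q') q).2) from rfl, h.1]
      exact ih rest2 _ _ _ h.2

end AuxRS
section AuxComb

/-- The swap of the 1-based values `j` and `j+1` on `ℕ`. -/
def fswapN (j x : ℕ) : ℕ := if x = j then j + 1 else if x = j + 1 then j else x

lemma aux_getElem_finRange' {n : ℕ} (m : ℕ) (hm : m < n) :
    (List.finRange n)[m]'(by simpa using hm) = ⟨m, hm⟩ := by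
  simp [List.getElem_finRange, Fin.cast]

lemma aux_filter_map_swap {n : ℕ} (a b : Fin n) (hab : (a : ℕ) + 1 = (b : ℕ))
    (p : Fin n → Bool) (g : Fin n → ℕ)
    (hp : ¬(p a = true ∧ p b = true)) :
    ((List.finRange n).filter (fun i => p (Equiv.swap a b i))).map
        (fun i => g (Equiv.swap a b i))
      = ((List.finRange n).filter p).map g := by
  have hbn : (b : ℕ) < n := b.2
  have hlen : (List.finRange n).length = n := List.length_finRange
  have hd : List.finRange n
      = (List.finRange n).take (a : ℕ) ++ a :: b :: (List.finRange n).drop ((b : ℕ) + 1) := by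
    conv_lhs => rw [← List.take_append_drop (a : ℕ) (List.finRange n)]
    congr 1
    rw [List.drop_eq_getElem_cons (by omega : (a : ℕ) < (List.finRange n).length)]
    have h1 : (a : ℕ) + 1 < (List.finRange n).length ∨ ¬ ((a:ℕ)+1 < (List.finRange n).length) := em _
    rw [show (List.finRange n)[(a : ℕ)]'(by omega) = a from by
      rw [aux_getElem_finRange' _ (by omega)]]
    congr 1
    rcases lt_or_ge ((a : ℕ) + 1) n with h | h
    · rw [List.drop_eq_getElem_cons (by omega : (a : ℕ) + 1 < (List.finRange n).length)]
      rw [show (List.finRange n)[(a : ℕ) + 1]'(by omega) = b from by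
        rw [aux_getElem_finRange' _ (by omega)]; exact Fin.ext hab]
      rw [hab]
    · omega
  have hA : ∀ i ∈ (List.finRange n).take (a : ℕ), Equiv.swap a b i = i := by
    intro i hi
    rw [List.mem_take_iff_getElem] at hi
    obtain ⟨m, hm, hmi⟩ := hi
    have hmval : (i : ℕ) = m := by
      rw [← hmi, aux_getElem_finRange' m (by simp at hm; omega)]
    have hma : m < (a : ℕ) := by simp at hm; omega
    apply Equiv.swap_apply_of_ne_of_ne
    · exact Fin.ne_of_val_ne (by omega)
    · exact Fin.ne_of_val_ne (by omega)
  have hB : ∀ i ∈ (List.finRange n).drop ((b : ℕ) + 1), Equiv.swap a b i = i := by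
    intro i hi
    rw [List.mem_drop_iff_getElem] at hi
    obtain ⟨m, hm, hmi⟩ := hi
    have hmval : (i : ℕ) = (b : ℕ) + 1 + m := by
      rw [← hmi, aux_getElem_finRange' _ (by omega)]
    apply Equiv.swap_apply_of_ne_of_ne
    · exact Fin.ne_of_val_ne (by omega)
    · exact Fin.ne_of_val_ne (by omega)
  have hfA : ((List.finRange n).take (a : ℕ)).filter (fun i => p (Equiv.swap a b i))
      = ((List.finRange n).take (a : ℕ)).filter p :=
    List.filter_congr (fun x hx => by rw [hA x hx])
  have hfB : ((List.finRange n).drop ((b : ℕ) + 1)).filter (fun i => p (Equiv.swap a b i))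
      = ((List.finRange n).drop ((b : ℕ) + 1)).filter p :=
    List.filter_congr (fun x hx => by rw [hB x hx])
  have hgA : ∀ (L : List (Fin n)), (∀ i ∈ L, Equiv.swap a b i = i) →
      (L.filter p).map (fun i => g (Equiv.swap a b i)) = (L.filter p).map g := by
    intro L hL
    exact List.map_congr_left (fun x hx => by rw [hL x (List.mem_of_mem_filter hx)])
  have hmA : (((List.finRange n).take (a : ℕ)).filter (fun i => p (Equiv.swap a b i))).map
        (fun i => g (Equiv.swap a b i))
      = (((List.finRange n).take (a : ℕ)).filter p).map g := by
    rw [hfA]; exact hgA _ hA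
  have hmB : (((List.finRange n).drop ((b : ℕ) + 1)).filter (fun i => p (Equiv.swap a b i))).map
        (fun i => g (Equiv.swap a b i))
      = (((List.finRange n).drop ((b : ℕ) + 1)).filter p).map g := by
    rw [hfB]; exact hgA _ hB
  rw [hd, List.filter_append, List.filter_append, List.map_append, List.map_append, hmA]
  congr 1
  cases hpa : p a <;> cases hpb : p b
  · simp only [List.filter_cons, Equiv.swap_apply_left, Equiv.swap_apply_right, hpa, hpb,
      Bool.false_eq_true, if_false]
    exact hmB
  · simp only [List.filter_cons, Equiv.swap_apply_left, Equiv.swap_apply_right, hpa, hpb,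
      Bool.false_eq_true, if_false, if_true, List.map_cons, Equiv.swap_apply_left]
    rw [hmB]
  · simp only [List.filter_cons, Equiv.swap_apply_left, Equiv.swap_apply_right, hpa, hpb,
      Bool.false_eq_true, if_false, if_true, List.map_cons, Equiv.swap_apply_right]
    rw [hmB]
  · exact absurd ⟨hpa, hpb⟩ hp

end AuxComb

lemma aux_swap_val {n : ℕ} (j : ℕ) (h1 : 1 ≤ j) (h2 : j + 1 ≤ n) (v : Fin n) :
    ((Equiv.swap (⟨j - 1, by omega⟩ : Fin n) ⟨j, by omega⟩) v : ℕ) + 1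
      = fswapN j ((v : ℕ) + 1) := by
  by_cases hv0 : v = (⟨j - 1, by omega⟩ : Fin n)
  · subst hv0
    rw [Equiv.swap_apply_left]
    simp only [fswapN]
    split_ifs <;> omega
  · by_cases hv1 : v = (⟨j, by omega⟩ : Fin n)
    · subst hv1
      rw [Equiv.swap_apply_right]
      simp only [fswapN]
      split_ifs <;> omega
    · rw [Equiv.swap_apply_of_ne_of_ne hv0 hv1]
      have hne0 : (v : ℕ) ≠ j - 1 := fun h => hv0 (Fin.ext h)
      have hne1 : (v : ℕ) ≠ j := fun h => hv1 (Fin.ext h)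
      simp only [fswapN]
      split_ifs <;> omega
section AuxWP

lemma aux_firsts_Rop {r n : ℕ} (hr : 1 ≤ r) (w : GW r n) (j : ℕ) (h1 : 1 ≤ j)
    (h2 : j + 1 ≤ n) (ha : RightAdm w j h1 h2) (k : ℕ) :
    (wordPairs (Rop w j h1 h2) k).map Prod.fst = (wordPairs w k).map Prod.fst := by
  haveI : NeZero r := ⟨by omega⟩
  set a0 : Fin n := ⟨j - 1, by omega⟩
  set b0 : Fin n := ⟨j, by omega⟩
  have hswapa : ∀ i, (Rop w j h1 h2).a i = w.a (Equiv.swap a0 b0 i) := by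
    intro i; simp [Rop, sEl, a0, b0]
  have hswapσ : ∀ i, (Rop w j h1 h2).σ i = w.σ (Equiv.swap a0 b0 i) := by
    intro i; simp [Rop, sEl, a0, b0]
  unfold wordPairs labelIdx
  rw [List.map_map, List.map_map]
  have e1 : (fun i => decide (((Rop w j h1 h2).a i).val = k))
      = (fun i => (fun i' => decide ((w.a i').val = k)) (Equiv.swap a0 b0 i)) := by
    funext i; rw [hswapa]
  have e2 : (Prod.fst ∘ fun i : Fin n => (((Rop w j h1 h2).σ i : ℕ) + 1, (i : ℕ) + 1))
      = (fun i => (fun i' : Fin n => ((w.σ i' : ℕ) + 1)) (Equiv.swap a0 b0 i)) := by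
    funext i; simp [hswapσ]
  have e3 : (Prod.fst ∘ fun i : Fin n => ((w.σ i : ℕ) + 1, (i : ℕ) + 1))
      = (fun i : Fin n => ((w.σ i : ℕ) + 1)) := by
    funext i; simp
  rw [e1, e2, e3]
  refine aux_filter_map_swap a0 b0 (by show j - 1 + 1 = j; omega)
    (fun i' => decide ((w.a i').val = k)) (fun i' : Fin n => ((w.σ i' : ℕ) + 1)) ?_
  rintro ⟨u, v⟩
  rw [decide_eq_true_iff] at u v
  exact ha (ZMod.val_injective r (u.trans v.symm))

lemma aux_wordPairs_Lop {r n : ℕ} (w : GW r n) (j : ℕ) (h1 : 1 ≤ j) (h2 : j + 1 ≤ n)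
    (k : ℕ) :
    wordPairs (Lop w j h1 h2) k = (wordPairs w k).map (fun q => (fswapN j q.1, q.2)) := by
  have hLa : ∀ i, (Lop w j h1 h2).a i = w.a i := by
    intro i; simp [Lop, sEl]
  have hLσ : ∀ i, (((Lop w j h1 h2).σ i : ℕ)) + 1 = fswapN j ((w.σ i : ℕ) + 1) := by
    intro i
    have h : (Lop w j h1 h2).σ i
        = Equiv.swap (⟨j - 1, by omega⟩ : Fin n) ⟨j, by omega⟩ (w.σ i) := by
      simp [Lop, sEl]
    rw [h, aux_swap_val j h1 h2]
  unfold wordPairs labelIdx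
  rw [List.map_map]
  have e1 : (fun i => decide (((Lop w j h1 h2).a i).val = k))
      = (fun i => decide ((w.a i).val = k)) := funext fun i => by rw [hLa]
  rw [e1]
  refine List.map_congr_left (fun i _ => ?_)
  simp only [Function.comp_apply]
  rw [← hLσ i]

lemma aux_fswap_mono {r n : ℕ} (hr : 1 ≤ r) (w : GW r n) (j : ℕ) (h1 : 1 ≤ j)
    (h2 : j + 1 ≤ n) (ha : LeftAdm w j h1 h2) (k : ℕ) :
    ∀ x y, x ∈ (wordPairs w k).map Prod.fst → y ∈ (wordPairs w k).map Prod.fst →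
      (x < y ↔ fswapN j x < fswapN j y) := by
  haveI : NeZero r := ⟨by omega⟩
  have key : ¬(j ∈ (wordPairs w k).map Prod.fst ∧ (j + 1) ∈ (wordPairs w k).map Prod.fst) := by
    rintro ⟨hj, hj1⟩
    simp only [wordPairs, labelIdx, List.map_map, List.mem_map, List.mem_filter,
      Function.comp_apply, decide_eq_true_iff] at hj hj1
    obtain ⟨i0, ⟨_, hi0k⟩, hi0⟩ := hj
    obtain ⟨i1, ⟨_, hi1k⟩, hi1⟩ := hj1
    have e0 : w.σ i0 = ⟨j - 1, by omega⟩ :=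
      Fin.ext (show ((w.σ i0 : ℕ)) = j - 1 by omega)
    have e1 : w.σ i1 = ⟨j, by omega⟩ :=
      Fin.ext (show ((w.σ i1 : ℕ)) = j by omega)
    have f0 : i0 = w.σ⁻¹ ⟨j - 1, by omega⟩ := by rw [← e0]; simp
    have f1 : i1 = w.σ⁻¹ ⟨j, by omega⟩ := by rw [← e1]; simp
    exact ha (ZMod.val_injective r ((f0 ▸ hi0k).trans (f1 ▸ hi1k).symm))
  intro x y hx hy
  have hxj : ¬(x = j ∧ y = j + 1) := by rintro ⟨rfl, rfl⟩; exact key ⟨hx, hy⟩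
  have hyj : ¬(y = j ∧ x = j + 1) := by rintro ⟨rfl, rfl⟩; exact key ⟨hy, hx⟩
  simp only [fswapN]
  split_ifs <;> omega

end AuxWP

/-- **Proposition.** For `w ∈ W_n`: if `R_j` is right admissible for `w` then
`P (R_j w) = P w`, and if `L_j` is left admissible for `w` then `Q (L_j w) = Q w`. -/
theorem Ptab_Rop_and_Qtab_Lop (r n : ℕ) (hr : 1 ≤ r) (hn : 1 ≤ n)
    (w : GW r n) (j : ℕ) (h1 : 1 ≤ j) (h2 : j + 1 ≤ n) :
    (RightAdm w j h1 h2 → Ptab (Rop w j h1 h2) = Ptab w) ∧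
      (LeftAdm w j h1 h2 → Qtab (Lop w j h1 h2) = Qtab w) := by
  constructor
  · intro ha
    funext k
    unfold Ptab RSword
    exact aux_foldl_fst_eq _ _ [] [] [] (aux_firsts_Rop hr w j h1 h2 ha k)
  · intro ha
    funext k
    unfold Qtab RSword
    rw [aux_wordPairs_Lop w j h1 h2 k]
    have h := aux_foldl_map (fun x => x ∈ (wordPairs w (k : ℕ)).map Prod.fst) (fswapN j)
      (aux_fswap_mono hr w j h1 h2 ha k) (wordPairs w (k : ℕ)) [] []
      (fun v hv => by simp at hv) (fun p hp => List.mem_map_of_mem (f := Prod.fst) hp)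
    rw [show ([] : Tab).map (List.map (fswapN j)) = [] from rfl] at h
    rw [h]
end

section
/- Let w ∈ W_n. If R_i is right admissible for w, then |inv(Q(R_i(w))) − inv(Q(w))| = 1 while inv(Q_k(R_i(w))) = inv(Q_k(w)) for every component index 0 ≤ k ≤ r−1. Dually, if L_i is left admissible for w, then |inv(P(L_i(w))) − inv(P(w))| = 1 while inv(P_k(L_i(w))) = inv(P_k(w)) for every 0 ≤ k ≤ r−1. -/
open scoped BigOperators

namespace RSAux

/-! ### List auxiliary lemmas -/

lemma findIdx_congr {α : Type*} {p q : α → Bool} :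
    ∀ {l : List α}, (∀ a ∈ l, p a = q a) → l.findIdx p = l.findIdx q
  | [], _ => rfl
  | a :: l, h => by
    have hal : p a = q a := h a List.mem_cons_self
    have ih : l.findIdx p = l.findIdx q :=
      findIdx_congr (fun b hb => h b (List.mem_cons_of_mem _ hb))
    simp [List.findIdx_cons, hal, ih]

lemma findIdx_map {α β : Type*} (f : α → β) (p : β → Bool) :
    ∀ (l : List α), (l.map f).findIdx p = l.findIdx (fun a => p (f a))
  | [] => rfl
  | a :: l => by simp [List.findIdx_cons, findIdx_map f p l]

lemma getD_map (f : ℕ → ℕ) :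
    ∀ (L : Tab) (i : ℕ), (L.map (List.map f)).getD i [] = (L.getD i []).map f
  | [], i => by simp
  | R :: L, 0 => rfl
  | R :: L, (i + 1) => getD_map f L i

lemma take_getElem_drop {l : List α} {i : ℕ} (h : i < l.length) :
    l = l.take i ++ l[i] :: l.drop (i + 1) := by
  rw [List.getElem_cons_drop, List.take_append_drop]

/-! ### Membership in the tableaux produced by the algorithm -/

lemma mem_flatten_place (Q : Tab) (i lab a : ℕ) :
    a ∈ (place Q i lab).flatten ↔ a = lab ∨ a ∈ Q.flatten := by
  unfold place
  split
  · next h =>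
    rw [List.getD_eq_getElem _ _ h, List.set_eq_take_cons_drop _ h]
    conv_rhs => rw [take_getElem_drop h]
    simp only [List.flatten_append, List.flatten_cons, List.mem_append, List.mem_cons,
      List.mem_singleton]
    tauto
  · simp [or_comm]

lemma mem_flatten_rowInsert :
    ∀ (T : Tab) (x a : ℕ), (a ∈ (rowInsert x T).flatten ↔ a = x ∨ a ∈ T.flatten)
  | [], x, a => by simp [rowInsert]
  | row :: rest, x, a => by
    unfold rowInsert
    split
    · next h =>
      set i := row.findIdx (fun y => decide (x < y)) with hi
      have hlt : i < row.length := h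
      simp only [List.flatten_cons, List.mem_append,
        mem_flatten_rowInsert rest (row.get ⟨i, h⟩) a]
      rw [List.set_eq_take_cons_drop x hlt]
      conv_rhs => rw [show row = row.take i ++ row[i] :: row.drop (i+1) from take_getElem_drop hlt]
      simp only [List.mem_append, List.mem_cons, List.get_eq_getElem, mem_flatten_rowInsert, ← hi]
      tauto
    · simp only [List.flatten_cons, List.mem_append, List.mem_cons, List.mem_singleton]
      tauto

lemma mem_flatten_foldl_snd :
    ∀ (word : List (ℕ × ℕ)) (P Q : Tab) (a : ℕ),
      (a ∈ ((word.foldl RSstep (P, Q)).2).flatten ↔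
        a ∈ Q.flatten ∨ a ∈ word.map Prod.snd)
  | [], P, Q, a => by simp
  | (x, lab) :: word, P, Q, a => by
    simp only [List.foldl_cons]
    rw [mem_flatten_foldl_snd word _ _ a]
    show a ∈ (place Q _ lab).flatten ∨ _ ↔ _
    rw [mem_flatten_place]
    simp only [List.map_cons, List.mem_cons]
    tauto

lemma mem_flatten_foldl_fst :
    ∀ (word : List (ℕ × ℕ)) (P Q : Tab) (a : ℕ),
      (a ∈ ((word.foldl RSstep (P, Q)).1).flatten ↔
        a ∈ P.flatten ∨ a ∈ word.map Prod.fst)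
  | [], P, Q, a => by simp
  | (x, lab) :: word, P, Q, a => by
    simp only [List.foldl_cons]
    rw [mem_flatten_foldl_fst word _ _ a]
    show a ∈ (rowInsert x P).flatten ∨ _ ↔ _
    rw [mem_flatten_rowInsert]
    simp only [List.map_cons, List.mem_cons]
    tauto


/-! ### The algorithm commutes with relabelings -/

lemma place_map (g : ℕ → ℕ) (Q : Tab) (i lab : ℕ) :
    place (Q.map (List.map g)) i (g lab) = (place Q i lab).map (List.map g) := by
  unfold place
  simp only [List.length_map]
  split
  · rw [getD_map]
    simp [List.map_set]
  · simp

lemma foldl_label_map (g : ℕ → ℕ) :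
    ∀ (word : List (ℕ × ℕ)) (P Q : Tab),
      (word.map (fun pr => (pr.1, g pr.2))).foldl RSstep (P, Q.map (List.map g)) =
        ((word.foldl RSstep (P, Q)).1, (word.foldl RSstep (P, Q)).2.map (List.map g))
  | [], P, Q => rfl
  | (x, lab) :: word, P, Q => by
    simp only [List.map_cons, List.foldl_cons]
    have hstep : RSstep (P, Q.map (List.map g)) (x, g lab) =
        ((RSstep (P, Q) (x, lab)).1, (RSstep (P, Q) (x, lab)).2.map (List.map g)) := by
      unfold RSstep
      simp only
      rw [place_map]
    rw [hstep]
    exact foldl_label_map g word (RSstep (P, Q) (x, lab)).1 (RSstep (P, Q) (x, lab)).2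

lemma rowInsert_map (f : ℕ → ℕ) (S : ℕ → Prop)
    (hf : ∀ x y, S x → S y → (x < y ↔ f x < f y)) :
    ∀ (T : Tab) (x : ℕ), S x → (∀ y ∈ T.flatten, S y) →
      rowInsert (f x) (T.map (List.map f)) = (rowInsert x T).map (List.map f)
  | [], x, _, _ => rfl
  | row :: rest, x, hx, hT => by
    have hrow : ∀ y ∈ row, S y := fun y hy => hT y (by simp [hy])
    have hidx : (row.map f).findIdx (fun y => decide (f x < y)) =
        row.findIdx (fun y => decide (x < y)) := by
      rw [findIdx_map]
      exact findIdx_congr (fun a ha => by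
        simp only [decide_eq_decide]
        exact (hf x a hx (hrow a ha)).symm)
    unfold rowInsert
    simp only [List.map_cons, hidx, List.length_map]
    split
    · next h =>
      have hget : (row.map f).get ⟨row.findIdx (fun y => decide (x < y)), by
          simpa using h⟩ = f (row.get ⟨row.findIdx (fun y => decide (x < y)), h⟩) := by
        simp [List.get_eq_getElem]
      rw [hget, rowInsert_map f S hf rest (row.get ⟨_, h⟩)
        (hrow _ (row.get_mem _)) (fun y hy => hT y (by simp [List.mem_flatten] at hy ⊢; tauto)),
        ← List.map_set]
      rfl
    · simp

lemma foldl_value_map (f : ℕ → ℕ) (S : ℕ → Prop)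
    (hf : ∀ x y, S x → S y → (x < y ↔ f x < f y)) :
    ∀ (word : List (ℕ × ℕ)) (P Q : Tab), (∀ y ∈ P.flatten, S y) → (∀ pr ∈ word, S pr.1) →
      (word.map (fun pr => (f pr.1, pr.2))).foldl RSstep (P.map (List.map f), Q) =
        ((word.foldl RSstep (P, Q)).1.map (List.map f), (word.foldl RSstep (P, Q)).2)
  | [], P, Q, _, _ => rfl
  | (x, lab) :: word, P, Q, hP, hw => by
    have hx : S x := hw _ List.mem_cons_self
    have h1 : rowInsert (f x) (P.map (List.map f)) = (rowInsert x P).map (List.map f) :=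
      rowInsert_map f S hf P x hx hP
    have hstep : RSstep (P.map (List.map f), Q) (f x, lab) =
        ((RSstep (P, Q) (x, lab)).1.map (List.map f), (RSstep (P, Q) (x, lab)).2) := by
      unfold RSstep
      simp only [h1, List.length_map]
      congr 2
      apply findIdx_congr
      intro i _
      simp only [getD_map, List.length_map, decide_eq_decide]
    rw [List.map_cons, List.foldl_cons, hstep, List.foldl_cons]
    exact foldl_value_map f S hf word (RSstep (P, Q) (x, lab)).1 (RSstep (P, Q) (x, lab)).2
      (fun y hy => by
        have : y ∈ (rowInsert x P).flatten := hy
        rw [mem_flatten_rowInsert] at this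
        rcases this with rfl | h
        · exact hx
        · exact hP y h)
      (fun pr hpr => hw pr (List.mem_cons_of_mem _ hpr))


/-! ### The swap `j ↔ j+1` on labels/values -/

def gsw (j x : ℕ) : ℕ := if x = j then j + 1 else if x = j + 1 then j else x

lemma gsw_lt_iff {j x y : ℕ} (hxy1 : ¬(x = j ∧ y = j + 1)) (hxy2 : ¬(x = j + 1 ∧ y = j)) :
    gsw j x < gsw j y ↔ x < y := by
  unfold gsw; split_ifs <;> omega

lemma gsw_inj (j : ℕ) : Function.Injective (gsw j) := by
  intro x y
  unfold gsw; split_ifs <;> omega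

lemma gsw_gsw (j x : ℕ) : gsw j (gsw j x) = x := by
  unfold gsw; split_ifs <;> omega

@[simp] lemma gsw_left (j : ℕ) : gsw j j = j + 1 := by simp [gsw]

@[simp] lemma gsw_right (j : ℕ) : gsw j (j + 1) = j := by simp [gsw]

lemma gsw_of_ne {j x : ℕ} (h1 : x ≠ j) (h2 : x ≠ j + 1) : gsw j x = x := by
  simp [gsw, h1, h2]

/-! ### Inversion statistics under injective relabelings -/

lemma card_filter_prod_image (f : ℕ → ℕ) (hfinj : Function.Injective f) (A B : Finset ℕ)
    (P : ℕ × ℕ → Prop) [DecidablePred P] :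
    (((A.image f) ×ˢ (B.image f)).filter P).card =
      ((A ×ˢ B).filter (fun p => P (f p.1, f p.2))).card := by
  rw [eq_comm]
  apply Finset.card_bij (fun p _ => (f p.1, f p.2))
  · rintro ⟨x, y⟩ hp
    simp only [Finset.mem_filter, Finset.mem_product, Finset.mem_image] at hp ⊢
    exact ⟨⟨⟨x, hp.1.1, rfl⟩, ⟨y, hp.1.2, rfl⟩⟩, hp.2⟩
  · rintro ⟨x, y⟩ _ ⟨x', y'⟩ _ h
    simp only [Prod.mk.injEq] at h
    exact Prod.ext (hfinj h.1) (hfinj h.2)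
  · rintro ⟨u, v⟩ hq
    simp only [Finset.mem_filter, Finset.mem_product, Finset.mem_image] at hq
    obtain ⟨⟨⟨x, hx, rfl⟩, ⟨y, hy, rfl⟩⟩, hP⟩ := hq
    exact ⟨(x, y), by simp [Finset.mem_filter, Finset.mem_product, hx, hy, hP], rfl⟩

lemma rowOf_map (f : ℕ → ℕ) (hfinj : Function.Injective f) (T : Tab) (x : ℕ) :
    rowOf (T.map (List.map f)) (f x) = rowOf T x := by
  unfold rowOf
  rw [findIdx_map]
  exact findIdx_congr (fun row _ => by
    simp only [decide_eq_decide]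
    exact List.mem_map_of_injective hfinj)

lemma labels_map (f : ℕ → ℕ) (T : Tab) :
    labels (T.map (List.map f)) = (labels T).image f := by
  ext a
  simp only [labels, List.mem_toFinset, Finset.mem_image, List.mem_flatten, List.mem_map]
  constructor
  · rintro ⟨row', ⟨row, hrow, rfl⟩, ha⟩
    obtain ⟨b, hb, rfl⟩ := List.mem_map.1 ha
    exact ⟨b, ⟨row, hrow, hb⟩, rfl⟩
  · rintro ⟨b, ⟨row, hrow, hb⟩, rfl⟩
    exact ⟨row.map f, ⟨row, hrow, rfl⟩, List.mem_map_of_mem hb⟩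

lemma invTab_map (f : ℕ → ℕ) (hfinj : Function.Injective f) (T : Tab)
    (hf : ∀ x y, x ∈ labels T → y ∈ labels T → (x < y ↔ f x < f y)) :
    invTab (T.map (List.map f)) = invTab T := by
  classical
  unfold invTab
  rw [labels_map, card_filter_prod_image f hfinj]
  apply congrArg Finset.card
  apply Finset.filter_congr
  rintro ⟨x, y⟩ hxy
  simp only [Finset.mem_product] at hxy
  rw [rowOf_map f hfinj, rowOf_map f hfinj]
  simp only [and_congr_left_iff]
  intro _
  exact (hf x y hxy.1 hxy.2).symm

lemma crossInv_map (g : ℕ → ℕ) (hginj : Function.Injective g) (S T S' T' : Tab)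
    (hS : labels S' = (labels S).image g) (hT : labels T' = (labels T).image g) :
    crossInv S' T' =
      ((labels S ×ˢ labels T).filter (fun p => g p.2 < g p.1)).card := by
  classical
  unfold crossInv
  rw [hS, hT, card_filter_prod_image g hginj]


/-! ### The change of `invMulti` under the swap of two adjacent labels -/

lemma invMulti_step {r : ℕ} (T T' : Fin r → Tab) (j : ℕ) (k0 k1 : Fin r) (hne : k0 ≠ k1)
    (hinv : ∀ k, invTab (T' k) = invTab (T k))
    (hlab : ∀ k, labels (T' k) = (labels (T k)).image (gsw j))
    (hj : ∀ k, j ∈ labels (T k) ↔ k = k0)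
    (hj1 : ∀ k, (j + 1) ∈ labels (T k) ↔ k = k1) :
    invMulti T' = invMulti T + 1 ∨ invMulti T = invMulti T' + 1 := by
  classical
  have hcs : ∀ k l : Fin r, crossInv (T' k) (T' l) =
      ((labels (T k) ×ˢ labels (T l)).filter (fun p => gsw j p.2 < gsw j p.1)).card :=
    fun k l => crossInv_map (gsw j) (gsw_inj j) _ _ _ _ (hlab k) (hlab l)
  have hgen : ∀ k l : Fin r, ¬(k = k0 ∧ l = k1) → ¬(k = k1 ∧ l = k0) →
      crossInv (T' k) (T' l) = crossInv (T k) (T l) := by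
    intro k l hA hB
    rw [hcs]
    unfold crossInv
    apply congrArg Finset.card
    apply Finset.filter_congr
    rintro ⟨x, y⟩ hxy
    simp only [Finset.mem_product] at hxy
    refine gsw_lt_iff ?_ ?_
    · rintro ⟨hy, hx⟩
      exact hB ⟨(hj1 k).1 (hx ▸ hxy.1), (hj l).1 (hy ▸ hxy.2)⟩
    · rintro ⟨hy, hx⟩
      exact hA ⟨(hj k).1 (hx ▸ hxy.1), (hj1 l).1 (hy ▸ hxy.2)⟩
  have hxcase : crossInv (T' k0) (T' k1) = crossInv (T k0) (T k1) + 1 := by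
    rw [hcs]
    have hset : (labels (T k0) ×ˢ labels (T k1)).filter (fun p => gsw j p.2 < gsw j p.1) =
        insert (j, j + 1)
          ((labels (T k0) ×ˢ labels (T k1)).filter (fun p => p.2 < p.1)) := by
      ext ⟨x, y⟩
      simp only [Finset.mem_insert, Finset.mem_filter, Finset.mem_product, Prod.mk.injEq]
      constructor
      · rintro ⟨⟨hx, hy⟩, hlt⟩
        by_cases hc : x = j ∧ y = j + 1
        · exact Or.inl hc
        · refine Or.inr ⟨⟨hx, hy⟩, ?_⟩
          have h1 : ¬(y = j ∧ x = j + 1) := by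
            rintro ⟨rfl, rfl⟩
            exact hne ((hj1 k0).1 hx)
          have h2 : ¬(y = j + 1 ∧ x = j) := by
            rintro ⟨rfl, rfl⟩
            exact hc ⟨rfl, rfl⟩
          exact (gsw_lt_iff h1 h2).1 hlt
      · rintro (⟨rfl, rfl⟩ | ⟨⟨hx, hy⟩, hlt⟩)
        · exact ⟨⟨(hj k0).2 rfl, (hj1 k1).2 rfl⟩, by simp⟩
        · refine ⟨⟨hx, hy⟩, ?_⟩
          have h1 : ¬(y = j ∧ x = j + 1) := by
            rintro ⟨rfl, rfl⟩
            exact hne ((hj1 k0).1 hx)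
          have h2 : ¬(y = j + 1 ∧ x = j) := by
            rintro ⟨rfl, rfl⟩
            omega
          exact (gsw_lt_iff h1 h2).2 hlt
    have hnotmem : (j, j + 1) ∉
        (labels (T k0) ×ˢ labels (T k1)).filter (fun p : ℕ × ℕ => p.2 < p.1) := by
      simp [Finset.mem_filter]
    rw [hset, Finset.card_insert_of_notMem hnotmem]
    rfl
  have hycase : crossInv (T k1) (T k0) = crossInv (T' k1) (T' k0) + 1 := by
    rw [hcs]
    have hset : (labels (T k1) ×ˢ labels (T k0)).filter (fun p => gsw j p.2 < gsw j p.1) =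
        ((labels (T k1) ×ˢ labels (T k0)).filter (fun p : ℕ × ℕ => p.2 < p.1)).erase
          (j + 1, j) := by
      ext ⟨x, y⟩
      simp only [Finset.mem_erase, Finset.mem_filter, Finset.mem_product, Prod.mk.injEq,
        ne_eq, not_and]
      constructor
      · rintro ⟨⟨hx, hy⟩, hlt⟩
        have hc : ¬(x = j + 1 ∧ y = j) := by
          rintro ⟨rfl, rfl⟩
          simp at hlt
        have h1 : ¬(y = j ∧ x = j + 1) := fun h => hc ⟨h.2, h.1⟩
        have h2 : ¬(y = j + 1 ∧ x = j) := by
          rintro ⟨rfl, rfl⟩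
          exact hne ((hj k1).1 hx).symm
        exact ⟨fun ha hb => hc ⟨ha, hb⟩, ⟨hx, hy⟩, (gsw_lt_iff h1 h2).1 hlt⟩
      · rintro ⟨hc, ⟨hx, hy⟩, hlt⟩
        have h1 : ¬(y = j ∧ x = j + 1) := fun h => hc h.2 h.1
        have h2 : ¬(y = j + 1 ∧ x = j) := by
          rintro ⟨rfl, rfl⟩
          exact hne ((hj k1).1 hx).symm
        exact ⟨⟨hx, hy⟩, (gsw_lt_iff h1 h2).2 hlt⟩
    have hmem : (j + 1, j) ∈
        (labels (T k1) ×ˢ labels (T k0)).filter (fun p : ℕ × ℕ => p.2 < p.1) := by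
      simp only [Finset.mem_filter, Finset.mem_product]
      exact ⟨⟨(hj1 k1).2 rfl, (hj k0).2 rfl⟩, by simp⟩
    have hpos : 0 < ((labels (T k1) ×ˢ labels (T k0)).filter
        (fun p : ℕ × ℕ => p.2 < p.1)).card := Finset.card_pos.2 ⟨_, hmem⟩
    rw [hset, Finset.card_erase_of_mem hmem]
    unfold crossInv
    omega
  have hS1 : ∑ k, invTab (T' k) = ∑ k, invTab (T k) :=
    Finset.sum_congr rfl (fun k _ => hinv k)
  rcases hne.lt_or_gt with h01 | h01
  · left
    unfold invMulti
    rw [hS1]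
    have hpt : ∀ k l : Fin r, (if k < l then crossInv (T' k) (T' l) else 0) =
        (if k < l then crossInv (T k) (T l) else 0) +
          (if k = k0 then (if l = k1 then 1 else 0) else 0) := by
      intro k l
      by_cases hkl : k < l
      · by_cases hk : k = k0
        · by_cases hl : l = k1
          · subst hk; subst hl
            simp [hkl, hxcase]
          · simp [hkl, hl,
              hgen k l (fun h => hl h.2) (fun h => hne (hk.symm.trans h.1))]
        · have hB : ¬(k = k1 ∧ l = k0) := by
            rintro ⟨rfl, rfl⟩
            exact absurd hkl (lt_asymm h01)
          simp [hkl, hk, hgen k l (fun h => hk h.1) hB]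
      · simp only [if_neg hkl, zero_add]
        split_ifs with hk hl
        · subst hk; subst hl
          exact absurd h01 hkl
        · rfl
        · rfl
    have hsum : ∑ k : Fin r, ∑ l : Fin r, (if k < l then crossInv (T' k) (T' l) else 0) =
        (∑ k : Fin r, ∑ l : Fin r, (if k < l then crossInv (T k) (T l) else 0)) + 1 := by
      have h1 : ∑ k : Fin r, ∑ l : Fin r, (if k < l then crossInv (T' k) (T' l) else 0) =
          ∑ k : Fin r, ((∑ l : Fin r, (if k < l then crossInv (T k) (T l) else 0)) +
            (if k = k0 then 1 else 0)) := by
        refine Finset.sum_congr rfl (fun k _ => ?_)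
        rw [Finset.sum_congr rfl (fun l _ => hpt k l), Finset.sum_add_distrib]
        congr 1
        by_cases hk : k = k0
        · simp [hk]
        · simp [hk]
      rw [h1, Finset.sum_add_distrib]
      simp
    omega
  · right
    unfold invMulti
    rw [hS1]
    have hpt : ∀ k l : Fin r, (if k < l then crossInv (T k) (T l) else 0) =
        (if k < l then crossInv (T' k) (T' l) else 0) +
          (if k = k1 then (if l = k0 then 1 else 0) else 0) := by
      intro k l
      by_cases hkl : k < l
      · by_cases hk : k = k1
        · by_cases hl : l = k0
          · subst hk; subst hl
            simp [hkl, hycase]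
          · simp [hkl, hl,
              hgen k l (fun h => hne (h.1.symm.trans hk)) (fun h => hl h.2)]
        · have hA : ¬(k = k0 ∧ l = k1) := by
            rintro ⟨rfl, rfl⟩
            exact absurd hkl (lt_asymm h01)
          simp [hkl, hk, (hgen k l hA (fun h => hk h.1)).symm]
      · simp only [if_neg hkl, zero_add]
        split_ifs with hk hl
        · subst hk; subst hl
          exact absurd h01 hkl
        · rfl
        · rfl
    have hsum : ∑ k : Fin r, ∑ l : Fin r, (if k < l then crossInv (T k) (T l) else 0) =
        (∑ k : Fin r, ∑ l : Fin r, (if k < l then crossInv (T' k) (T' l) else 0)) + 1 := by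
      have h1 : ∑ k : Fin r, ∑ l : Fin r, (if k < l then crossInv (T k) (T l) else 0) =
          ∑ k : Fin r, ((∑ l : Fin r, (if k < l then crossInv (T' k) (T' l) else 0)) +
            (if k = k1 then 1 else 0)) := by
        refine Finset.sum_congr rfl (fun k _ => ?_)
        rw [Finset.sum_congr rfl (fun l _ => hpt k l), Finset.sum_add_distrib]
        congr 1
        by_cases hk : k = k1
        · simp [hk]
        · simp [hk]
      rw [h1, Finset.sum_add_distrib]
      simp
    omega


/-! ### Filtering `finRange` through an adjacent transposition -/

lemma filter_swap_finRange {n : ℕ} (p q : Fin n) (hpq : (q : ℕ) = (p : ℕ) + 1)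
    (pred : Fin n → Bool) (hpred : ¬(pred p = true ∧ pred q = true)) :
    (List.finRange n).filter (fun i => pred (Equiv.swap p q i)) =
      ((List.finRange n).filter pred).map (Equiv.swap p q) := by
  haveI : Std.Antisymm (α := Fin n) (· < ·) := ⟨fun a b hab hba => absurd hba (lt_asymm hab)⟩
  have hs1 : List.Pairwise (· < ·)
      ((List.finRange n).filter (fun i => pred (Equiv.swap p q i))) :=
    (List.pairwise_lt_finRange n).filter _
  have hs2 : List.Pairwise (· < ·)
      (((List.finRange n).filter pred).map (Equiv.swap p q)) := by
    rw [List.pairwise_map]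
    refine List.Pairwise.imp_of_mem ?_ ((List.pairwise_lt_finRange n).filter pred)
    intro a b ha hb hab
    rw [List.mem_filter] at ha hb
    have hpa := ha.2
    have hpb := hb.2
    rcases eq_or_ne a p with rfl | hap
    · have hbq : b ≠ q := by rintro rfl; exact hpred ⟨hpa, hpb⟩
      have hbp : b ≠ a := ne_of_gt hab
      rw [Equiv.swap_apply_left, Equiv.swap_apply_of_ne_of_ne hbp hbq, Fin.lt_def, hpq]
      have hv1 : (a : ℕ) < (b : ℕ) := Fin.lt_def.1 hab
      have hv2 : (b : ℕ) ≠ (q : ℕ) := fun h => hbq (Fin.ext h)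
      omega
    · rcases eq_or_ne a q with rfl | haq
      · have hbq : b ≠ a := ne_of_gt hab
        have hbp : b ≠ p := by
          rintro rfl
          have := Fin.lt_def.1 hab
          omega
        rw [Equiv.swap_apply_right, Equiv.swap_apply_of_ne_of_ne hbp hbq, Fin.lt_def]
        have hv1 : (a : ℕ) < (b : ℕ) := Fin.lt_def.1 hab
        have hv2 : (b : ℕ) ≠ (p : ℕ) := fun h => hbp (Fin.ext h)
        omega
      · rcases eq_or_ne b p with rfl | hbp
        · rw [Equiv.swap_apply_of_ne_of_ne hap haq, Equiv.swap_apply_left, Fin.lt_def, hpq]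
          have hv1 : (a : ℕ) < (b : ℕ) := Fin.lt_def.1 hab
          omega
        · rcases eq_or_ne b q with rfl | hbq
          · rw [Equiv.swap_apply_of_ne_of_ne hap haq, Equiv.swap_apply_right, Fin.lt_def]
            have hv1 : (a : ℕ) < (b : ℕ) := Fin.lt_def.1 hab
            have hv2 : (a : ℕ) ≠ (p : ℕ) := fun h => hap (Fin.ext h)
            omega
          · rwa [Equiv.swap_apply_of_ne_of_ne hap haq, Equiv.swap_apply_of_ne_of_ne hbp hbq]
  have hn1 : ((List.finRange n).filter (fun i => pred (Equiv.swap p q i))).Nodup :=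
    (List.nodup_finRange n).filter _
  have hn2 : (((List.finRange n).filter pred).map (Equiv.swap p q)).Nodup :=
    ((List.nodup_finRange n).filter pred).map (Equiv.injective _)
  have hts : ((List.finRange n).filter (fun i => pred (Equiv.swap p q i))).toFinset =
      (((List.finRange n).filter pred).map (Equiv.swap p q)).toFinset := by
    ext x
    simp only [List.mem_toFinset, List.mem_filter, List.mem_map]
    constructor
    · intro h
      exact ⟨Equiv.swap p q x, ⟨List.mem_finRange _, h.2⟩, Equiv.swap_apply_self p q x⟩
    · rintro ⟨a, ⟨-, hpa⟩, rfl⟩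
      exact ⟨List.mem_finRange _, by rwa [Equiv.swap_apply_self]⟩
  exact List.Perm.eq_of_pairwise' hs1 hs2
    (List.perm_of_nodup_nodup_toFinset_eq hn1 hn2 hts)

lemma swap_val_succ {n : ℕ} (p q : Fin n) (j : ℕ) (hp : (p : ℕ) + 1 = j) (hq : (q : ℕ) = j)
    (i : Fin n) : ((Equiv.swap p q i : Fin n) : ℕ) + 1 = gsw j ((i : ℕ) + 1) := by
  rcases eq_or_ne i p with rfl | hip
  · rw [Equiv.swap_apply_left, hq, hp, gsw_left]
  · rcases eq_or_ne i q with rfl | hiq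
    · rw [Equiv.swap_apply_right, hq, gsw_right, hp]
    · rw [Equiv.swap_apply_of_ne_of_ne hip hiq, gsw_of_ne]
      · intro h
        exact hip (Fin.ext (by omega))
      · intro h
        exact hiq (Fin.ext (by omega))

/-! ### The effect of the operators on the words -/

variable {r n : ℕ}

lemma Rop_a (w : GW r n) (j : ℕ) (h1 : 1 ≤ j) (h2 : j + 1 ≤ n) (i : Fin n) :
    (Rop w j h1 h2).a i = w.a (Equiv.swap (⟨j - 1, by omega⟩ : Fin n) ⟨j, by omega⟩ i) := by
  show w.a _ + _ = _
  simp [sEl]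

lemma Rop_sigma (w : GW r n) (j : ℕ) (h1 : 1 ≤ j) (h2 : j + 1 ≤ n) (i : Fin n) :
    (Rop w j h1 h2).σ i = w.σ (Equiv.swap (⟨j - 1, by omega⟩ : Fin n) ⟨j, by omega⟩ i) := rfl

lemma Lop_a (w : GW r n) (j : ℕ) (h1 : 1 ≤ j) (h2 : j + 1 ≤ n) (i : Fin n) :
    (Lop w j h1 h2).a i = w.a i := by
  show (0 : ZMod r) + _ = _
  simp

lemma Lop_sigma (w : GW r n) (j : ℕ) (h1 : 1 ≤ j) (h2 : j + 1 ≤ n) (i : Fin n) :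
    (Lop w j h1 h2).σ i = Equiv.swap (⟨j - 1, by omega⟩ : Fin n) ⟨j, by omega⟩ (w.σ i) := rfl

lemma wordPairs_Rop (hr : 1 ≤ r) (w : GW r n) (j : ℕ) (h1 : 1 ≤ j) (h2 : j + 1 ≤ n)
    (hadm : RightAdm w j h1 h2) (k : ℕ) :
    wordPairs (Rop w j h1 h2) k = (wordPairs w k).map (fun pr => (pr.1, gsw j pr.2)) := by
  haveI : NeZero r := ⟨by omega⟩
  set p : Fin n := ⟨j - 1, by omega⟩ with hpdef
  set q : Fin n := ⟨j, by omega⟩ with hqdef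
  have hlab : labelIdx (Rop w j h1 h2) k = (labelIdx w k).map (Equiv.swap p q) := by
    unfold labelIdx
    rw [List.filter_congr (q := fun i => decide ((w.a (Equiv.swap p q i)).val = k))
      (fun i _ => by rw [decide_eq_decide, Rop_a w j h1 h2 i])]
    exact filter_swap_finRange p q (by simp [hpdef, hqdef]; omega)
      (fun i => decide ((w.a i).val = k))
      (by
        simp only [decide_eq_true_eq, not_and]
        intro hk1 hk2
        apply hadm
        apply ZMod.val_injective r
        exact hk1.trans hk2.symm)
  unfold wordPairs
  rw [hlab]
  simp only [List.map_map]
  apply List.map_congr_left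
  intro i _
  simp only [Function.comp_apply]
  refine Prod.ext ?_ ?_
  · show ((Rop w j h1 h2).σ (Equiv.swap p q i) : ℕ) + 1 = _
    rw [Rop_sigma, Equiv.swap_apply_self]
  · show ((Equiv.swap p q i : Fin n) : ℕ) + 1 = _
    exact swap_val_succ p q j (by simp [hpdef]; omega) (by simp [hqdef]) i

lemma wordPairs_Lop (w : GW r n) (j : ℕ) (h1 : 1 ≤ j) (h2 : j + 1 ≤ n) (k : ℕ) :
    wordPairs (Lop w j h1 h2) k = (wordPairs w k).map (fun pr => (gsw j pr.1, pr.2)) := by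
  set p : Fin n := ⟨j - 1, by omega⟩ with hpdef
  set q : Fin n := ⟨j, by omega⟩ with hqdef
  have hlab : labelIdx (Lop w j h1 h2) k = labelIdx w k := by
    unfold labelIdx
    exact List.filter_congr (fun i _ => by rw [decide_eq_decide, Lop_a w j h1 h2 i])
  unfold wordPairs
  rw [hlab]
  simp only [List.map_map]
  apply List.map_congr_left
  intro i _
  simp only [Function.comp_apply]
  refine Prod.ext ?_ ?_
  · show ((Lop w j h1 h2).σ i : ℕ) + 1 = _
    rw [Lop_sigma]
    exact swap_val_succ p q j (by simp [hpdef]; omega) (by simp [hqdef]) (w.σ i)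
  · rfl

/-! ### Labels of the multitableaux -/

lemma mem_labels_Qtab (w : GW r n) (k : Fin r) (x : ℕ) :
    x ∈ labels (Qtab w k) ↔ x ∈ (wordPairs w (k : ℕ)).map Prod.snd := by
  simp only [labels, List.mem_toFinset, Qtab, RSword]
  rw [mem_flatten_foldl_snd]
  simp

lemma mem_labels_Ptab (w : GW r n) (k : Fin r) (x : ℕ) :
    x ∈ labels (Ptab w k) ↔ x ∈ (wordPairs w (k : ℕ)).map Prod.fst := by
  simp only [labels, List.mem_toFinset, Ptab, RSword]
  rw [mem_flatten_foldl_fst]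
  simp

lemma mem_snd_wordPairs (w : GW r n) (k : ℕ) (x : ℕ) :
    x ∈ (wordPairs w k).map Prod.snd ↔ ∃ i : Fin n, (w.a i).val = k ∧ (i : ℕ) + 1 = x := by
  simp [wordPairs, labelIdx, List.mem_filter]

lemma mem_fst_wordPairs (w : GW r n) (k : ℕ) (x : ℕ) :
    x ∈ (wordPairs w k).map Prod.fst ↔
      ∃ i : Fin n, (w.a i).val = k ∧ ((w.σ i : Fin n) : ℕ) + 1 = x := by
  simp [wordPairs, labelIdx, List.mem_filter]

end RSAux

/-- **Proposition.** If `R_j` is right admissible for `w`, then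
`|inv (Q (R_j w)) - inv (Q w)| = 1` while `inv (Q_k (R_j w)) = inv (Q_k w)` for
every component index `k`; dually, if `L_j` is left admissible for `w`, then
`|inv (P (L_j w)) - inv (P w)| = 1` while `inv (P_k (L_j w)) = inv (P_k w)` for
every `k`. -/
theorem inv_change_of_admissible (r n : ℕ) (hr : 1 ≤ r) (hn : 1 ≤ n)
    (w : GW r n) (j : ℕ) (h1 : 1 ≤ j) (h2 : j + 1 ≤ n) :
    (RightAdm w j h1 h2 →
      ((invMulti (Qtab (Rop w j h1 h2)) : ℤ) - (invMulti (Qtab w) : ℤ)).natAbs = 1 ∧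
        ∀ k : Fin r, invTab (Qtab (Rop w j h1 h2) k) = invTab (Qtab w k)) ∧
    (LeftAdm w j h1 h2 →
      ((invMulti (Ptab (Lop w j h1 h2)) : ℤ) - (invMulti (Ptab w) : ℤ)).natAbs = 1 ∧
        ∀ k : Fin r, invTab (Ptab (Lop w j h1 h2) k) = invTab (Ptab w k)) := by
  haveI : NeZero r := ⟨by omega⟩
  constructor
  · -- Right admissible case
    intro hadm
    set p : Fin n := ⟨j - 1, by omega⟩ with hpdef
    set q : Fin n := ⟨j, by omega⟩ with hqdef
    have hpv : (p : ℕ) = j - 1 := rfl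
    have hqv : (q : ℕ) = j := rfl
    have hvalne : (w.a p).val ≠ (w.a q).val := fun h => hadm (ZMod.val_injective r h)
    set k0 : Fin r := ⟨(w.a p).val, ZMod.val_lt _⟩ with hk0def
    set k1 : Fin r := ⟨(w.a q).val, ZMod.val_lt _⟩ with hk1def
    have hne : k0 ≠ k1 := fun h => hvalne (congrArg Fin.val h)
    have hQ : ∀ k : Fin r, Qtab (Rop w j h1 h2) k = (Qtab w k).map (List.map (RSAux.gsw j)) := by
      intro k
      show (RSword (wordPairs (Rop w j h1 h2) (k : ℕ))).2 = _
      rw [RSAux.wordPairs_Rop hr w j h1 h2 hadm]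
      have h := RSAux.foldl_label_map (RSAux.gsw j) (wordPairs w (k : ℕ)) [] []
      simp only [List.map_nil] at h
      exact congrArg Prod.snd h
    have hjm : ∀ k : Fin r, j ∈ labels (Qtab w k) ↔ k = k0 := by
      intro k
      rw [RSAux.mem_labels_Qtab, RSAux.mem_snd_wordPairs]
      constructor
      · rintro ⟨i, hik, hij⟩
        have hip : i = p := by
          apply Fin.ext
          rw [hpv]
          omega
        rw [hip] at hik
        exact Fin.ext hik.symm
      · rintro rfl
        exact ⟨p, rfl, by rw [hpv]; omega⟩
    have hj1m : ∀ k : Fin r, (j + 1) ∈ labels (Qtab w k) ↔ k = k1 := by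
      intro k
      rw [RSAux.mem_labels_Qtab, RSAux.mem_snd_wordPairs]
      constructor
      · rintro ⟨i, hik, hij⟩
        have hiq : i = q := by
          apply Fin.ext
          rw [hqv]
          omega
        rw [hiq] at hik
        exact Fin.ext hik.symm
      · rintro rfl
        exact ⟨q, rfl, by rw [hqv]⟩
    have hlabm : ∀ k : Fin r, labels (Qtab (Rop w j h1 h2) k) =
        (labels (Qtab w k)).image (RSAux.gsw j) :=
      fun k => by rw [hQ k, RSAux.labels_map]
    have hinv : ∀ k : Fin r, invTab (Qtab (Rop w j h1 h2) k) = invTab (Qtab w k) := by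
      intro k
      rw [hQ k]
      refine RSAux.invTab_map (RSAux.gsw j) (RSAux.gsw_inj j) _ ?_
      intro x y hx hy
      refine (RSAux.gsw_lt_iff ?_ ?_).symm
      · rintro ⟨rfl, rfl⟩
        exact hne (((hjm k).1 hx).symm.trans ((hj1m k).1 hy))
      · rintro ⟨rfl, rfl⟩
        exact hne (((hjm k).1 hy).symm.trans ((hj1m k).1 hx))
    refine ⟨?_, hinv⟩
    rcases RSAux.invMulti_step (Qtab w) (Qtab (Rop w j h1 h2)) j k0 k1 hne hinv hlabm
      hjm hj1m with h | h <;> omega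
  · -- Left admissible case
    intro hadm
    set p : Fin n := ⟨j - 1, by omega⟩ with hpdef
    set q : Fin n := ⟨j, by omega⟩ with hqdef
    have hpv : (p : ℕ) = j - 1 := rfl
    have hqv : (q : ℕ) = j := rfl
    have hvalne : (w.a (w.σ⁻¹ p)).val ≠ (w.a (w.σ⁻¹ q)).val :=
      fun h => hadm (ZMod.val_injective r h)
    set k0 : Fin r := ⟨(w.a (w.σ⁻¹ p)).val, ZMod.val_lt _⟩ with hk0def
    set k1 : Fin r := ⟨(w.a (w.σ⁻¹ q)).val, ZMod.val_lt _⟩ with hk1def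
    have hne : k0 ≠ k1 := fun h => hvalne (congrArg Fin.val h)
    have hjm : ∀ k : Fin r, j ∈ labels (Ptab w k) ↔ k = k0 := by
      intro k
      rw [RSAux.mem_labels_Ptab, RSAux.mem_fst_wordPairs]
      constructor
      · rintro ⟨i, hik, hij⟩
        have hip : w.σ i = p := by
          apply Fin.ext
          rw [hpv]
          omega
        have : i = w.σ⁻¹ p := by
          rw [← hip]
          simp
        rw [this] at hik
        exact Fin.ext hik.symm
      · rintro rfl
        refine ⟨w.σ⁻¹ p, rfl, ?_⟩
        rw [show w.σ (w.σ⁻¹ p) = p from Equiv.apply_symm_apply w.σ p, hpv]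
        omega
    have hj1m : ∀ k : Fin r, (j + 1) ∈ labels (Ptab w k) ↔ k = k1 := by
      intro k
      rw [RSAux.mem_labels_Ptab, RSAux.mem_fst_wordPairs]
      constructor
      · rintro ⟨i, hik, hij⟩
        have hiq : w.σ i = q := by
          apply Fin.ext
          rw [hqv]
          omega
        have : i = w.σ⁻¹ q := by
          rw [← hiq]
          simp
        rw [this] at hik
        exact Fin.ext hik.symm
      · rintro rfl
        refine ⟨w.σ⁻¹ q, rfl, ?_⟩
        rw [show w.σ (w.σ⁻¹ q) = q from Equiv.apply_symm_apply w.σ q, hqv]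
    have hfS : ∀ k : Fin r, ∀ x y : ℕ, x ∈ labels (Ptab w k) → y ∈ labels (Ptab w k) →
        (x < y ↔ RSAux.gsw j x < RSAux.gsw j y) := by
      intro k x y hx hy
      refine (RSAux.gsw_lt_iff ?_ ?_).symm
      · rintro ⟨rfl, rfl⟩
        exact hne (((hjm k).1 hx).symm.trans ((hj1m k).1 hy))
      · rintro ⟨rfl, rfl⟩
        exact hne (((hjm k).1 hy).symm.trans ((hj1m k).1 hx))
    have hP : ∀ k : Fin r, Ptab (Lop w j h1 h2) k = (Ptab w k).map (List.map (RSAux.gsw j)) := by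
      intro k
      show (RSword (wordPairs (Lop w j h1 h2) (k : ℕ))).1 = _
      rw [RSAux.wordPairs_Lop w j h1 h2]
      have h := RSAux.foldl_value_map (RSAux.gsw j) (fun x => x ∈ labels (Ptab w k))
        (hfS k) (wordPairs w (k : ℕ)) [] [] (by simp)
        (fun pr hpr => by
          show pr.1 ∈ labels (Ptab w k)
          rw [RSAux.mem_labels_Ptab]
          exact List.mem_map_of_mem hpr)
      simp only [List.map_nil] at h
      exact congrArg Prod.fst h
    have hlabm : ∀ k : Fin r, labels (Ptab (Lop w j h1 h2) k) =
        (labels (Ptab w k)).image (RSAux.gsw j) :=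
      fun k => by rw [hP k, RSAux.labels_map]
    have hinv : ∀ k : Fin r, invTab (Ptab (Lop w j h1 h2) k) = invTab (Ptab w k) := by
      intro k
      rw [hP k]
      exact RSAux.invTab_map (RSAux.gsw j) (RSAux.gsw_inj j) _ (hfS k)
    refine ⟨?_, hinv⟩
    rcases RSAux.invMulti_step (Ptab w) (Ptab (Lop w j h1 h2)) j k0 k1 hne hinv hlabm
      hjm hj1m with h | h <;> omega
end

section
/- Let w ∈ W_n and suppose R_i is right admissible for w. Then the boxes labeled i and i+1 lie in different component tableaux of Q(w), and Q(R_i(w)) is the standard multitableau obtained from Q(w) by interchanging the labels i and i+1. -/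
open scoped BigOperators

/-! ### Auxiliary lemmas for the proof of `Qtab_Rop_eq_swap_labels` -/

section Aux

lemma place_map (f : ℕ → ℕ) (Q : Tab) (i lab : ℕ) :
    (place Q i lab).map (List.map f) = place (Q.map (List.map f)) i (f lab) := by
  unfold place
  simp only [List.length_map]
  by_cases h : i < Q.length
  · simp only [h, if_true]
    rw [List.map_set]
    congr 1
    rw [List.getD_eq_getElem _ _ h,
      List.getD_eq_getElem (Q.map (List.map f)) _ (by simpa using h)]
    simp
  · simp [h]

lemma RSstep_map (f : ℕ → ℕ) (P Q : Tab) (x lab : ℕ) :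
    RSstep (P, Q.map (List.map f)) (x, f lab) =
      ((RSstep (P, Q) (x, lab)).1, (RSstep (P, Q) (x, lab)).2.map (List.map f)) := by
  unfold RSstep
  dsimp only
  rw [place_map]

lemma foldl_RS_map (f : ℕ → ℕ) :
    ∀ (word : List (ℕ × ℕ)) (P Q : Tab),
      (word.map (fun pr => (pr.1, f pr.2))).foldl RSstep (P, Q.map (List.map f)) =
        ((word.foldl RSstep (P, Q)).1, (word.foldl RSstep (P, Q)).2.map (List.map f))
  | [], P, Q => rfl
  | (x, lab) :: tl, P, Q => by
      simp only [List.map_cons, List.foldl_cons]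
      rw [RSstep_map]
      exact foldl_RS_map f tl (RSstep (P, Q) (x, lab)).1 (RSstep (P, Q) (x, lab)).2

lemma RSword_map_snd (f : ℕ → ℕ) (word : List (ℕ × ℕ)) :
    (RSword (word.map (fun pr => (pr.1, f pr.2)))).2 = (RSword word).2.map (List.map f) := by
  have h := foldl_RS_map f word [] []
  unfold RSword
  simp only [List.map_nil] at h ⊢
  rw [h]

lemma mem_flatten_place (Q : Tab) (i lab x : ℕ) :
    x ∈ (place Q i lab).flatten ↔ x = lab ∨ x ∈ Q.flatten := by
  unfold place
  by_cases h : i < Q.length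
  · simp only [h, if_true]
    rw [List.set_eq_take_append_cons_drop]
    simp only [h, if_true]
    conv_rhs => rw [show Q.flatten = (Q.take i ++ Q[i] :: Q.drop (i + 1)).flatten by
      rw [← List.drop_eq_getElem_cons h, List.take_append_drop]]
    rw [List.getD_eq_getElem _ _ h]
    simp only [List.flatten_append, List.flatten_cons, List.mem_append, List.mem_cons,
      List.mem_singleton]
    tauto
  · simp only [h, if_false]
    simp only [List.flatten_append, List.flatten_cons, List.mem_append, List.mem_singleton,
      List.flatten_nil, List.not_mem_nil, or_false]
    tauto

lemma mem_labels_foldl (x : ℕ) :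
    ∀ (word : List (ℕ × ℕ)) (pq : Tab × Tab),
      x ∈ (word.foldl RSstep pq).2.flatten ↔
        x ∈ pq.2.flatten ∨ x ∈ word.map Prod.snd
  | [], pq => by simp
  | (v, lab) :: tl, pq => by
      simp only [List.foldl_cons, List.map_cons, List.mem_cons]
      rw [mem_labels_foldl x tl (RSstep pq (v, lab))]
      have : (RSstep pq (v, lab)).2 = place pq.2 _ lab := rfl
      rw [this, mem_flatten_place]
      tauto

lemma filter_map_eq_filterMap {α β : Type*} (pr : α → Bool) (m : α → β) (l : List α) :
    (l.filter pr).map m = l.filterMap (fun a => if pr a then some (m a) else none) := by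
  induction l with
  | nil => rfl
  | cons a t ih =>
      by_cases h : pr a <;> simp [List.filter_cons, List.filterMap_cons, h, ih]

lemma filterMap_adj {α β : Type*} (l₁ l₂ : List α) (p q : α) (g g' : α → Option β)
    (h₁ : ∀ x ∈ l₁, g' x = g x) (h₂ : ∀ x ∈ l₂, g' x = g x)
    (hp : g' p = g q) (hq : g' q = g p) (hnone : g p = none ∨ g q = none) :
    (l₁ ++ p :: q :: l₂).filterMap g' = (l₁ ++ p :: q :: l₂).filterMap g := by
  rw [List.filterMap_append, List.filterMap_append, List.filterMap_congr h₁,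
    List.filterMap_cons, List.filterMap_cons, List.filterMap_cons, List.filterMap_cons,
    List.filterMap_congr h₂, hp, hq]
  cases hgp : g p <;> cases hgq : g q <;> simp_all

lemma mem_take_finRange {n m : ℕ} {x : Fin n} (h : x ∈ (List.finRange n).take m) :
    (x : ℕ) < m := by
  obtain ⟨i, hi, hx⟩ := List.mem_iff_getElem.mp h
  rw [List.getElem_take, List.getElem_finRange] at hx
  have hxi : (x : ℕ) = i := by rw [← hx]; rfl
  have : i < min m (List.finRange n).length := by simpa using hi
  omega

lemma mem_drop_finRange {n m : ℕ} {x : Fin n} (h : x ∈ (List.finRange n).drop m) :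
    m ≤ (x : ℕ) := by
  obtain ⟨i, hi, hx⟩ := List.mem_iff_getElem.mp h
  rw [List.getElem_drop, List.getElem_finRange] at hx
  have hxi : (x : ℕ) = m + i := by rw [← hx]; rfl
  omega

end Aux

/-- If `R_j` is right admissible for `w`, then the boxes labeled `j` and `j + 1`
lie in different component tableaux of `Q w`, and `Q (R_j w)` is obtained from
`Q w` by interchanging the labels `j` and `j + 1`. -/
theorem Qtab_Rop_eq_swap_labels (r n : ℕ) (hr : 1 ≤ r) (hn : 1 ≤ n)
    (w : GW r n) (j : ℕ) (h1 : 1 ≤ j) (h2 : j + 1 ≤ n)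
    (ha : RightAdm w j h1 h2) :
    (∃ k l : Fin r, k ≠ l ∧ j ∈ labels (Qtab w k) ∧ j + 1 ∈ labels (Qtab w l)) ∧
      Qtab (Rop w j h1 h2) = fun k =>
        (Qtab w k).map (List.map fun x =>
          if x = j then j + 1 else if x = j + 1 then j else x) := by
  haveI : NeZero r := ⟨by omega⟩
  set f : ℕ → ℕ := fun x => if x = j then j + 1 else if x = j + 1 then j else x with hf
  set p : Fin n := ⟨j - 1, by omega⟩ with hp
  set q : Fin n := ⟨j, by omega⟩ with hq
  have hapq : w.a p ≠ w.a q := ha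
  have hwa : ∀ i, (Rop w j h1 h2).a i = w.a (Equiv.swap p q i) := by
    intro i
    show w.a ((sEl r n j h1 h2).σ i) + (sEl r n j h1 h2).a i = _
    simp [sEl, hp, hq]
  have hws : ∀ i, (Rop w j h1 h2).σ i = w.σ (Equiv.swap p q i) := by
    intro i
    show (w.σ * (sEl r n j h1 h2).σ) i = _
    simp [sEl, hp, hq, Equiv.Perm.mul_apply]
  have hfq : f ((q : ℕ) + 1) = (p : ℕ) + 1 := by
    show f (j + 1) = (j - 1) + 1
    simp only [hf]
    split_ifs <;> omega
  have hfp : f ((p : ℕ) + 1) = (q : ℕ) + 1 := by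
    show f ((j - 1) + 1) = j + 1
    simp only [hf]
    split_ifs <;> omega
  -- the key lemma on words
  have hword : ∀ k : ℕ, wordPairs (Rop w j h1 h2) k =
      (wordPairs w k).map (fun pr => (pr.1, f pr.2)) := by
    intro k
    unfold wordPairs labelIdx
    rw [List.map_map]
    rw [filter_map_eq_filterMap, filter_map_eq_filterMap]
    have hsplit : List.finRange n =
        (List.finRange n).take (j - 1) ++ p :: q :: (List.finRange n).drop (j + 1) := by
      have hl : (List.finRange n).length = n := List.length_finRange
      have hj1 : j - 1 < (List.finRange n).length := by omega
      have hj : j < (List.finRange n).length := by omega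
      conv_lhs => rw [← List.take_append_drop (j - 1) (List.finRange n)]
      congr 1
      rw [List.drop_eq_getElem_cons hj1]
      have hd : j - 1 + 1 = j := by omega
      rw [hd, List.drop_eq_getElem_cons hj]
      congr 1
      · rw [List.getElem_finRange]; ext; simp [hp]
      congr 1
      · rw [List.getElem_finRange]; ext; simp [hq]
    rw [hsplit]
    apply filterMap_adj
    · intro x hx
      have hxlt : (x : ℕ) < j - 1 := mem_take_finRange hx
      have hxp : x ≠ p := Fin.ne_of_val_ne (show (x : ℕ) ≠ j - 1 by omega)
      have hxq : x ≠ q := Fin.ne_of_val_ne (show (x : ℕ) ≠ j by omega)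
      have hswap : Equiv.swap p q x = x := Equiv.swap_apply_of_ne_of_ne hxp hxq
      have hfx : f ((x : ℕ) + 1) = (x : ℕ) + 1 := by
        simp only [hf]
        split_ifs <;> omega
      rw [hwa, hws, hswap]
      simp only [Function.comp_apply, hfx]
    · intro x hx
      have hxge : j + 1 ≤ (x : ℕ) := mem_drop_finRange hx
      have hxp : x ≠ p := Fin.ne_of_val_ne (show (x : ℕ) ≠ j - 1 by omega)
      have hxq : x ≠ q := Fin.ne_of_val_ne (show (x : ℕ) ≠ j by omega)
      have hswap : Equiv.swap p q x = x := Equiv.swap_apply_of_ne_of_ne hxp hxq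
      have hfx : f ((x : ℕ) + 1) = (x : ℕ) + 1 := by
        simp only [hf]
        split_ifs <;> omega
      rw [hwa, hws, hswap]
      simp only [Function.comp_apply, hfx]
    · rw [hwa, hws, Equiv.swap_apply_left]
      simp only [Function.comp_apply, hfq]
    · rw [hwa, hws, Equiv.swap_apply_right]
      simp only [Function.comp_apply, hfp]
    · by_cases hk : (w.a p).val = k
      · right
        have : (w.a q).val ≠ k := by
          intro h
          exact hapq (ZMod.val_injective r (by rw [hk, h]))
        simp [this]
      · left
        simp [hk]
  constructor
  · -- existence of k, l
    refine ⟨⟨(w.a p).val, ZMod.val_lt _⟩, ⟨(w.a q).val, ZMod.val_lt _⟩, ?_, ?_, ?_⟩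
    · intro h
      have := congrArg Fin.val h
      simp only at this
      exact hapq (ZMod.val_injective r this)
    · show j ∈ labels (RSword (wordPairs w ((w.a p).val))).2
      rw [labels, List.mem_toFinset]
      rw [show (RSword (wordPairs w ((w.a p).val))).2 =
        ((wordPairs w ((w.a p).val)).foldl RSstep ([], [])).2 from rfl]
      rw [mem_labels_foldl]
      right
      have hmem : p ∈ labelIdx w ((w.a p).val) := by
        rw [labelIdx, List.mem_filter]
        exact ⟨List.mem_finRange p, by simp⟩
      rw [wordPairs, List.map_map]
      refine List.mem_map.mpr ⟨p, hmem, ?_⟩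
      show (p : ℕ) + 1 = j
      show j - 1 + 1 = j
      omega
    · show j + 1 ∈ labels (RSword (wordPairs w ((w.a q).val))).2
      rw [labels, List.mem_toFinset]
      rw [show (RSword (wordPairs w ((w.a q).val))).2 =
        ((wordPairs w ((w.a q).val)).foldl RSstep ([], [])).2 from rfl]
      rw [mem_labels_foldl]
      right
      have hmem : q ∈ labelIdx w ((w.a q).val) := by
        rw [labelIdx, List.mem_filter]
        exact ⟨List.mem_finRange q, by simp⟩
      rw [wordPairs, List.map_map]
      exact List.mem_map.mpr ⟨q, hmem, rfl⟩
  · funext k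
    show (RSword (wordPairs (Rop w j h1 h2) (k : ℕ))).2 = _
    rw [hword, RSword_map_snd]
    rfl
end
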